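/- arXiv:1712.00875 — 5 statements merged into one kernel-verified Lean document; each statement's English description precedes it below -/
import Mathlib

section
/- Let G be a locally finite weighted graph, φ:V→[0,∞) non-negative and finitely supported, and for f with 0 ≤ f ≤ φ define Q_t^φ f := (P_t f) ∧ φ and P_t^φ f := inf over all decompositions t₁+…+t_n = t of Q_{t₁}^φ ⋯ Q_{t_n}^φ f, where P_t is the heat semigroup. Then P_t^φ is a semigroup: P_t^φ P_s^φ f = P_{t+s}^φ f for all s,t ≥ 0 and all f ∈ [0,φ]. -/
open scoped BigOperators

/-- A locally finite weighted graph. -/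
structure WeightedGraph (V : Type) where
  w : V → V → ℝ
  m : V → ℝ
  symm : ∀ x y, w x y = w y x
  loopless : ∀ x, w x x = 0
  nonneg : ∀ x y, 0 ≤ w x y
  mpos : ∀ x, 0 < m x
  locFin : ∀ x, Set.Finite {y | w x y ≠ 0}

namespace WeightedGraph

variable {V : Type} (G : WeightedGraph V)

/-- The underlying simple graph. -/
def toSimple : SimpleGraph V where
  Adj x y := x ≠ y ∧ G.w x y ≠ 0
  symm := by
    constructor
    intro x y h
    exact ⟨h.1.symm, by rw [G.symm y x]; exact h.2⟩
  loopless := by constructor; intro x h; exact h.1 rfl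

/-- The combinatorial graph distance. -/
noncomputable def dist (x y : V) : ℕ := G.toSimple.dist x y

/-- The graph Laplacian. -/
noncomputable def lap (f : V → ℝ) (x : V) : ℝ :=
  (∑ᶠ y, G.w x y * (f y - f x)) / G.m x

/-- The weighted vertex degree. -/
noncomputable def deg (x : V) : ℝ := (∑ᶠ y, G.w x y) / G.m x

/-- `f` is `1`-Lipschitz with respect to the combinatorial distance. -/
def Lip1 (f : V → ℝ) : Prop := ∀ x y, |f x - f y| ≤ (G.dist x y : ℝ)

/-- The Ollivier curvature, via the limit-free formula
`κ(x,y) = inf {∇_{xy} Δ f : f ∈ Lip(1) ∩ C_c(V), ∇_{yx} f = 1}`. -/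
noncomputable def curv (x y : V) : ℝ :=
  sInf { c | ∃ f : V → ℝ, G.Lip1 f ∧ (Function.support f).Finite ∧
    f y - f x = (G.dist x y : ℝ) ∧ c = (G.lap f x - G.lap f y) / (G.dist x y : ℝ) }

end WeightedGraph

/-- `u` is a non-negative bounded solution of the heat equation with initial datum `f`. -/
def IsHeatSolution {V : Type} (G : WeightedGraph V) (f : V → ℝ) (u : ℝ → V → ℝ) : Prop :=
  u 0 = f ∧ (∀ t x, 0 ≤ t → 0 ≤ u t x) ∧ (∃ C, ∀ t x, 0 ≤ t → u t x ≤ C) ∧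
  ∀ x t, 0 ≤ t → HasDerivWithinAt (fun s => u s x) (G.lap (u t) x) (Set.Ici 0) t

/-- `P` is the minimal heat semigroup: for every non-negative bounded `f`, `t ↦ P t f` is the
smallest non-negative bounded solution of the heat equation with initial datum `f`; on signed
bounded functions it is given by linearity from the positive and negative parts. -/
def IsHeatSemigroup {V : Type} (G : WeightedGraph V) (P : ℝ → (V → ℝ) → V → ℝ) : Prop :=
  (∀ f : V → ℝ, (∀ x, 0 ≤ f x) → (∃ C, ∀ x, f x ≤ C) →
    IsHeatSolution G f (fun t => P t f) ∧
    ∀ u, IsHeatSolution G f u → ∀ t x, 0 ≤ t → P t f x ≤ u t x) ∧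
  (∀ f : V → ℝ, (∃ C, ∀ x, |f x| ≤ C) → ∀ t x,
    P t f x = P t (fun y => max (f y) 0) x - P t (fun y => max (-f y) 0) x)

/-- The one-step cutoff operator `Q_t^φ f := (P_t f) ∧ φ`. -/
noncomputable def Qcut {V : Type} (G : WeightedGraph V) (P : ℝ → (V → ℝ) → V → ℝ)
    (φ : V → ℝ) (t : ℝ) (f : V → ℝ) : V → ℝ :=
  fun x => min (P t f x) (φ x)

/-- The cutoff semigroup `P_t^φ f := inf_{t₁+⋯+t_n = t} Q_{t₁}^φ ⋯ Q_{t_n}^φ f`. -/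
noncomputable def Pcut {V : Type} (G : WeightedGraph V) (P : ℝ → (V → ℝ) → V → ℝ)
    (φ : V → ℝ) (t : ℝ) (f : V → ℝ) (x : V) : ℝ :=
  sInf { c | ∃ l : List ℝ, (∀ s ∈ l, 0 ≤ s) ∧ l.sum = t ∧
    c = (l.foldr (fun s g => Qcut G P φ s g) f) x }

open MeasureTheory intervalIntegral Set Filter Topology

namespace HeatAux

variable {V : Type} (G : WeightedGraph V)

/-- neighbours of `x` -/
noncomputable def nbr (x : V) : Finset V := (G.locFin x).toFinset

/-- averaging operator -/
noncomputable def Af (h : V → ℝ) (x : V) : ℝ := (∑ y ∈ nbr G x, G.w x y * h y) / G.m x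

/-- degree -/
noncomputable def Df (x : V) : ℝ := (∑ y ∈ nbr G x, G.w x y) / G.m x

lemma lap_eq (h : V → ℝ) (x : V) : G.lap h x = Af G h x - Df G x * h x := by
  have hsupp : (Function.support fun y => G.w x y * (h y - h x)) ⊆ ↑(nbr G x) := by
    intro y hy
    simp only [Function.mem_support] at hy
    have : G.w x y ≠ 0 := fun h0 => hy (by rw [h0]; ring)
    simpa [nbr, Set.Finite.mem_toFinset] using this
  have : (∑ᶠ y, G.w x y * (h y - h x)) = ∑ y ∈ nbr G x, G.w x y * (h y - h x) :=
    finsum_eq_finset_sum_of_support_subset _ hsupp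
  rw [WeightedGraph.lap, this]
  rw [Af, Df, div_mul_eq_mul_div, div_sub_div_same]
  congr 1
  rw [Finset.sum_mul, ← Finset.sum_sub_distrib]
  exact Finset.sum_congr rfl fun y _ => by ring

lemma Df_nonneg (x : V) : 0 ≤ Df G x :=
  div_nonneg (Finset.sum_nonneg fun y _ => G.nonneg x y) (G.mpos x).le

lemma Af_mono {h₁ h₂ : V → ℝ} (hle : ∀ y, h₁ y ≤ h₂ y) (x : V) : Af G h₁ x ≤ Af G h₂ x :=
  div_le_div_of_nonneg_right
    (Finset.sum_le_sum fun y _ => mul_le_mul_of_nonneg_left (hle y) (G.nonneg x y)) (G.mpos x).le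
    |>.trans_eq rfl

lemma Af_congr {h₁ h₂ : V → ℝ} (hle : ∀ y, h₁ y = h₂ y) (x : V) : Af G h₁ x = Af G h₂ x :=
  le_antisymm (Af_mono G (fun y => (hle y).le) x) (Af_mono G (fun y => (hle y).ge) x)

lemma Af_nonneg {h : V → ℝ} (h0 : ∀ y, 0 ≤ h y) (x : V) : 0 ≤ Af G h x :=
  div_nonneg (Finset.sum_nonneg fun y _ => mul_nonneg (G.nonneg x y) (h0 y)) (G.mpos x).le

lemma Af_le {h : V → ℝ} {C : ℝ} (hb : ∀ y, h y ≤ C) (x : V) : Af G h x ≤ Df G x * C := by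
  rw [Df, div_mul_eq_mul_div]
  refine div_le_div_of_nonneg_right ?_ (G.mpos x).le
  rw [Finset.sum_mul]
  exact Finset.sum_le_sum fun y _ => mul_le_mul_of_nonneg_left (hb y) (G.nonneg x y)

lemma Af_contOn {u : ℝ → V → ℝ} {s : Set ℝ}
    (hc : ∀ y, ContinuousOn (fun τ => u τ y) s) (x : V) :
    ContinuousOn (fun τ => Af G (u τ) x) s := by
  simp only [Af]
  exact (continuousOn_finset_sum (nbr G x) fun y _ =>
    continuousOn_const.mul (hc y)).div_const _

lemma Af_cont {u : ℝ → V → ℝ}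
    (hc : ∀ y, Continuous (fun τ => u τ y)) (x : V) :
    Continuous (fun τ => Af G (u τ) x) := by
  simp only [Af]
  exact (continuous_finset_sum (nbr G x) fun y _ => continuous_const.mul (hc y)).div_const _

lemma Af_meas {u : ℝ → V → ℝ}
    (hc : ∀ y, Measurable (fun τ => u τ y)) (x : V) :
    Measurable (fun τ => Af G (u τ) x) := by
  simp only [Af]
  exact (Finset.measurable_sum (nbr G x) fun y _ => (hc y).const_mul (G.w x y)).div_const _

/-- continuity of a heat solution on `[0,∞)` -/
lemma sol_contOn {h : V → ℝ} {u : ℝ → V → ℝ} (hu : IsHeatSolution G h u) (y : V) :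
    ContinuousOn (fun τ => u τ y) (Ici 0) :=
  fun τ hτ => (hu.2.2.2 y τ hτ).continuousWithinAt

/-- the integral equation satisfied by any heat solution -/
lemma inteq {h : V → ℝ} {u : ℝ → V → ℝ} (hu : IsHeatSolution G h u)
    {t : ℝ} (ht : 0 ≤ t) (x : V) :
    Real.exp (Df G x * t) * u t x
      = h x + ∫ τ in (0:ℝ)..t, Real.exp (Df G x * τ) * Af G (u τ) x := by
  set F : ℝ → ℝ := fun τ => Real.exp (Df G x * τ) * u τ x with hF
  have hder : ∀ τ ∈ Ici (0:ℝ), HasDerivWithinAt F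
      (Real.exp (Df G x * τ) * Af G (u τ) x) (Ici 0) τ := by
    intro τ hτ
    have hexp : HasDerivAt (fun τ => Real.exp (Df G x * τ))
        (Real.exp (Df G x * τ) * Df G x) τ := by
      simpa using ((hasDerivAt_id τ).const_mul (Df G x)).exp
    have := (hexp.hasDerivWithinAt (s := Ici 0)).mul (hu.2.2.2 x τ hτ)
    rw [lap_eq] at this
    convert this using 1 <;> first | rfl | ring
  have hcont : ContinuousOn F (Icc 0 t) := fun τ hτ =>
    ((hder τ hτ.1).continuousWithinAt).mono Icc_subset_Ici_self
  have hint : IntervalIntegrable (fun τ => Real.exp (Df G x * τ) * Af G (u τ) x)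
      volume 0 t := by
    apply ContinuousOn.intervalIntegrable
    rw [uIcc_of_le ht]
    exact ((Real.continuous_exp.comp (continuous_const.mul continuous_id)).continuousOn).mul
      (Af_contOn G (fun y => (sol_contOn G hu y).mono Icc_subset_Ici_self) x)
  have := integral_eq_sub_of_hasDeriv_right_of_le ht hcont
    (fun τ hτ => (hder τ (le_of_lt hτ.1)).mono (Ioi_subset_Ici (le_of_lt hτ.1))) hint
  have hF0 : F 0 = h x := by simp [hF, hu.1]
  rw [this, hF0]
  ring
/-- Picard iterates for the minimal heat semigroup -/
noncomputable def picard (f : V → ℝ) : ℕ → ℝ → V → ℝ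
  | 0 => fun _ _ => 0
  | n + 1 => fun t x => Real.exp (-(Df G x * t)) *
      (f x + ∫ τ in (0:ℝ)..t, Real.exp (Df G x * τ) * Af G (picard f n τ) x)

lemma picard_cont (f : V → ℝ) : ∀ n y, Continuous fun t => picard G f n t y := by
  intro n
  induction n with
  | zero => intro y; simpa [picard] using continuous_const
  | succ n ih =>
    intro y
    have hg : Continuous fun τ => Real.exp (Df G y * τ) * Af G (picard G f n τ) y :=
      (Real.continuous_exp.comp (continuous_const.mul continuous_id)).mul
        (Af_cont G (fun z => ih z) y)
    have hprim : Continuous fun t => ∫ τ in (0:ℝ)..t,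
        Real.exp (Df G y * τ) * Af G (picard G f n τ) y :=
      intervalIntegral.continuous_primitive (fun a b => hg.intervalIntegrable a b) 0
    show Continuous fun t => Real.exp (-(Df G y * t)) * (f y + _)
    exact ((Real.continuous_exp.comp (continuous_const.mul continuous_id).neg)).mul
      (continuous_const.add hprim)

lemma picard_intlem (f : V → ℝ) (n : ℕ) (x : V) (a b : ℝ) :
    IntervalIntegrable (fun τ => Real.exp (Df G x * τ) * Af G (picard G f n τ) x)
      volume a b :=
  ((Real.continuous_exp.comp (continuous_const.mul continuous_id)).mul
    (Af_cont G (fun z => picard_cont G f n z) x)).intervalIntegrable a b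

lemma picard_mono (f : V → ℝ) (hf0 : ∀ x, 0 ≤ f x) :
    ∀ n t, 0 ≤ t → ∀ x, picard G f n t x ≤ picard G f (n + 1) t x := by
  intro n
  induction n with
  | zero =>
    intro t ht x
    show (0:ℝ) ≤ _
    have h0 : ∀ τ, Af G (picard G f 0 τ) x = 0 := by
      intro τ; simp [Af, picard]
    apply mul_nonneg (Real.exp_nonneg _)
    have : (∫ τ in (0:ℝ)..t, Real.exp (Df G x * τ) * Af G (picard G f 0 τ) x) = 0 := by
      rw [intervalIntegral.integral_congr (g := fun _ => (0:ℝ))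
        (fun τ _ => by rw [h0]; ring)]
      simp
    rw [this]
    simpa using hf0 x
  | succ n ih =>
    intro t ht x
    show Real.exp (-(Df G x * t)) * _ ≤ Real.exp (-(Df G x * t)) * _
    apply mul_le_mul_of_nonneg_left _ (Real.exp_nonneg _)
    apply add_le_add_right
    apply intervalIntegral.integral_mono_on ht (picard_intlem G f n x 0 t)
      (picard_intlem G f (n+1) x 0 t)
    intro τ hτ
    exact mul_le_mul_of_nonneg_left
      (Af_mono G (fun y => ih τ hτ.1 y) x) (Real.exp_nonneg _)

lemma picard_nonneg (f : V → ℝ) (hf0 : ∀ x, 0 ≤ f x) :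
    ∀ n t, 0 ≤ t → ∀ x, 0 ≤ picard G f n t x := by
  intro n
  induction n with
  | zero => intro t ht x; simp [picard]
  | succ n ih => intro t ht x; exact (ih t ht x).trans (picard_mono G f hf0 n t ht x)

/-- Picard iterates are below any supersolution -/
lemma picard_le_sol (f : V → ℝ) {h : V → ℝ} {u : ℝ → V → ℝ}
    (hu : IsHeatSolution G h u) (hfh : ∀ x, f x ≤ h x) :
    ∀ n t, 0 ≤ t → ∀ x, picard G f n t x ≤ u t x := by
  intro n
  induction n with
  | zero => intro t ht x; simpa [picard] using hu.2.1 t x ht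
  | succ n ih =>
    intro t ht x
    have hueq : u t x = Real.exp (-(Df G x * t)) *
        (h x + ∫ τ in (0:ℝ)..t, Real.exp (Df G x * τ) * Af G (u τ) x) := by
      rw [← inteq G hu ht x, ← mul_assoc, ← Real.exp_add]
      simp
    rw [hueq]
    show Real.exp (-(Df G x * t)) * _ ≤ Real.exp (-(Df G x * t)) * _
    apply mul_le_mul_of_nonneg_left _ (Real.exp_nonneg _)
    apply add_le_add (hfh x)
    refine intervalIntegral.integral_mono_on ht (picard_intlem G f n x 0 t) ?_ ?_
    · apply ContinuousOn.intervalIntegrable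
      rw [uIcc_of_le ht]
      exact ((Real.continuous_exp.comp (continuous_const.mul continuous_id)).continuousOn).mul
        (Af_contOn G (fun y => (sol_contOn G hu y).mono Icc_subset_Ici_self) x)
    · intro τ hτ
      exact mul_le_mul_of_nonneg_left (Af_mono G (fun y => ih τ hτ.1 y) x)
        (Real.exp_nonneg _)
/-- The comparison principle: the minimal semigroup started at `f` stays below any
non-negative bounded solution whose initial datum dominates `f`. -/
lemma comp {P : ℝ → (V → ℝ) → V → ℝ} (hP : IsHeatSemigroup G P)
    {f g : V → ℝ} (hf0 : ∀ x, 0 ≤ f x) (hfb : ∃ C, ∀ x, f x ≤ C)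
    {u : ℝ → V → ℝ} (hu : IsHeatSolution G g u) (hfg : ∀ x, f x ≤ g x)
    {t : ℝ} (ht : 0 ≤ t) (x : V) : P t f x ≤ u t x := by
  obtain ⟨solP, minP⟩ := hP.1 f hf0 hfb
  obtain ⟨C, hC⟩ := solP.2.2.1
  set C' : ℝ := max C 0 with hC'def
  have hle_pf : ∀ n τ, 0 ≤ τ → ∀ y, picard G f n τ y ≤ P τ f y :=
    picard_le_sol G f solP (fun y => le_refl (f y))
  have hle_u : ∀ n τ, 0 ≤ τ → ∀ y, picard G f n τ y ≤ u τ y :=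
    picard_le_sol G f hu hfg
  have hpicC : ∀ n τ, 0 ≤ τ → ∀ y, picard G f n τ y ≤ C' :=
    fun n τ hτ y => ((hle_pf n τ hτ y).trans (hC τ y hτ)).trans (le_max_left _ _)
  set vl : ℝ → V → ℝ := fun τ y => ⨆ n, picard G f n (max τ 0) y with hvldef
  have hbdd : ∀ τ y, BddAbove (Set.range fun n => picard G f n (max τ 0) y) := by
    intro τ y
    refine ⟨C', ?_⟩
    rintro c ⟨n, rfl⟩
    exact hpicC n _ (le_max_right _ _) y
  have hmono : ∀ τ y, Monotone fun n => picard G f n (max τ 0) y := fun τ y =>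
    monotone_nat_of_le_succ fun n => picard_mono G f hf0 n _ (le_max_right _ _) y
  have htend : ∀ τ y, Tendsto (fun n => picard G f n (max τ 0) y) atTop (𝓝 (vl τ y)) :=
    fun τ y => tendsto_atTop_ciSup (hmono τ y) (hbdd τ y)
  have hmax : ∀ τ : ℝ, 0 ≤ τ → max τ 0 = τ := fun τ hτ => max_eq_left hτ
  have htend' : ∀ τ, 0 ≤ τ → ∀ y,
      Tendsto (fun n => picard G f n τ y) atTop (𝓝 (vl τ y)) := by
    intro τ hτ y
    have := htend τ y
    rwa [hmax τ hτ] at this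
  have hvl_nonneg : ∀ τ y, 0 ≤ vl τ y := by
    intro τ y
    have h0 : (0:ℝ) = picard G f 0 (max τ 0) y := by simp [picard]
    rw [hvldef]
    exact h0.le.trans (le_ciSup (hbdd τ y) 0)
  have hvlC : ∀ τ y, vl τ y ≤ C' := fun τ y =>
    ciSup_le fun n => hpicC n _ (le_max_right _ _) y
  have hvl_le_u : ∀ τ, 0 ≤ τ → ∀ y, vl τ y ≤ u τ y := by
    intro τ hτ y
    rw [hvldef]
    exact ciSup_le fun n => by rw [hmax τ hτ]; exact hle_u n τ hτ y
  have hvl_meas : ∀ y, Measurable fun τ => vl τ y := by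
    intro y
    refine measurable_of_tendsto_metrizable
      (f := fun n τ => picard G f n (max τ 0) y) (g := fun τ => vl τ y)
      (fun n => ((picard_cont G f n y).comp (continuous_id.max continuous_const)).measurable) ?_
    rw [tendsto_pi_nhds]
    exact fun τ => htend τ y
  -- integrability of the limit integrand
  have hAf_bd : ∀ τ (z : V), Af G (vl τ) z ≤ Df G z * C' ∧ 0 ≤ Af G (vl τ) z := fun τ z =>
    ⟨Af_le G (fun y => hvlC τ y) z, Af_nonneg G (fun y => hvl_nonneg τ y) z⟩
  have hgmeas : ∀ z : V, Measurable fun τ => Real.exp (Df G z * τ) * Af G (vl τ) z :=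
    fun z => ((Real.continuous_exp.comp (continuous_const.mul continuous_id)).measurable).mul
      (Af_meas G hvl_meas z)
  have hgint : ∀ (z : V) (a b : ℝ),
      IntervalIntegrable (fun τ => Real.exp (Df G z * τ) * Af G (vl τ) z) volume a b := by
    intro z a b
    rw [intervalIntegrable_iff]
    have hfin : volume (Set.uIoc a b) < ⊤ := measure_Ioc_lt_top
    refine MeasureTheory.Integrable.mono'
      ((integrableOn_const hfin.ne) :
        IntegrableOn (fun _ => Real.exp (Df G z * (|a| + |b|)) * (Df G z * C')) (Set.uIoc a b) volume)
      ((hgmeas z).aestronglyMeasurable) ?_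
    refine (ae_restrict_iff' measurableSet_uIoc).mpr (Filter.Eventually.of_forall ?_)
    intro τ hτ
    have hτle : τ ≤ |a| + |b| := by
      rcases hτ with ⟨h1, h2⟩
      calc τ ≤ max a b := h2
      _ ≤ |a| + |b| := max_le ((le_abs_self a).trans (le_add_of_nonneg_right (abs_nonneg b)))
        ((le_abs_self b).trans (le_add_of_nonneg_left (abs_nonneg a)))
    have h1 : Real.exp (Df G z * τ) ≤ Real.exp (Df G z * (|a| + |b|)) :=
      Real.exp_le_exp.mpr (mul_le_mul_of_nonneg_left hτle (Df_nonneg G z))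
    have h2 := hAf_bd τ z
    rw [Real.norm_eq_abs, abs_of_nonneg (mul_nonneg (Real.exp_nonneg _) h2.2)]
    exact mul_le_mul h1 h2.1 h2.2 (Real.exp_nonneg _)
  -- the limit function satisfies the integral equation
  have hkey : ∀ τ, 0 ≤ τ → ∀ z, vl τ z = Real.exp (-(Df G z * τ)) *
      (f z + ∫ σ in (0:ℝ)..τ, Real.exp (Df G z * σ) * Af G (vl σ) z) := by
    intro τ hτ z
    have hlimint : Tendsto
        (fun n => ∫ σ in (0:ℝ)..τ, Real.exp (Df G z * σ) * Af G (picard G f n σ) z)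
        atTop (𝓝 (∫ σ in (0:ℝ)..τ, Real.exp (Df G z * σ) * Af G (vl σ) z)) := by
      refine intervalIntegral.tendsto_integral_filter_of_dominated_convergence
        (bound := fun _ => Real.exp (Df G z * τ) * (Df G z * C'))
        (Filter.Eventually.of_forall fun n =>
          (((Real.continuous_exp.comp (continuous_const.mul continuous_id)).mul
            (Af_cont G (fun y => picard_cont G f n y) z))).aestronglyMeasurable.restrict)
        (Filter.Eventually.of_forall fun n => Filter.Eventually.of_forall fun σ hσ => ?_)
        intervalIntegrable_const
        (Filter.Eventually.of_forall fun σ hσ => ?_)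
      · rw [uIoc_of_le hτ] at hσ
        have hσ0 : (0:ℝ) ≤ σ := hσ.1.le
        have hb1 : Real.exp (Df G z * σ) ≤ Real.exp (Df G z * τ) :=
          Real.exp_le_exp.mpr (mul_le_mul_of_nonneg_left hσ.2 (Df_nonneg G z))
        have hb2 : Af G (picard G f n σ) z ≤ Df G z * C' :=
          Af_le G (fun y => hpicC n σ hσ0 y) z
        have hb3 : 0 ≤ Af G (picard G f n σ) z :=
          Af_nonneg G (fun y => picard_nonneg G f hf0 n σ hσ0 y) z
        rw [Real.norm_eq_abs, abs_of_nonneg (mul_nonneg (Real.exp_nonneg _) hb3)]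
        exact mul_le_mul hb1 hb2 hb3 (Real.exp_nonneg _)
      · rw [uIoc_of_le hτ] at hσ
        have hσ0 : (0:ℝ) ≤ σ := hσ.1.le
        have hsum : Tendsto (fun n => ∑ y ∈ nbr G z, G.w z y * picard G f n σ y) atTop
            (𝓝 (∑ y ∈ nbr G z, G.w z y * vl σ y)) :=
          tendsto_finset_sum _ fun y _ => (htend' σ hσ0 y).const_mul _
        exact ((hsum.div_const (G.m z)).const_mul _)
    have h1 : Tendsto (fun n => picard G f (n+1) τ z) atTop (𝓝 (vl τ z)) :=
      (htend' τ hτ z).comp (tendsto_add_atTop_nat 1)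
    have h2 : Tendsto (fun n => picard G f (n+1) τ z) atTop
        (𝓝 (Real.exp (-(Df G z * τ)) *
          (f z + ∫ σ in (0:ℝ)..τ, Real.exp (Df G z * σ) * Af G (vl σ) z))) := by
      have := (hlimint.const_add (f z)).const_mul (Real.exp (-(Df G z * τ)))
      convert this using 2
      rfl
    exact tendsto_nhds_unique h1 h2
  -- the candidate solution
  set usol : ℝ → V → ℝ := fun τ z => Real.exp (-(Df G z * τ)) *
      (f z + ∫ σ in (0:ℝ)..τ, Real.exp (Df G z * σ) * Af G (vl σ) z) with husoldef
  have husol_eq_vl : ∀ τ, 0 ≤ τ → ∀ z, usol τ z = vl τ z := fun τ hτ z => (hkey τ hτ z).symm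
  have hvl_self : ∀ τ z, vl τ z = vl (max τ 0) z := by
    intro τ z
    rw [hvldef]
    simp only []
    rw [max_eq_left (le_max_right τ 0)]
  have hvl_cont : ∀ z, Continuous fun τ => vl τ z := by
    intro z
    have hWc : Continuous fun τ => ∫ σ in (0:ℝ)..τ, Real.exp (Df G z * σ) * Af G (vl σ) z :=
      intervalIntegral.continuous_primitive (fun a b => hgint z a b) 0
    have husolc : Continuous fun τ => usol τ z :=
      ((Real.continuous_exp.comp (continuous_const.mul continuous_id).neg)).mul
        (continuous_const.add hWc)
    have : (fun τ => vl τ z) = (fun τ => usol (max τ 0) z) := by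
      funext τ
      rw [husol_eq_vl (max τ 0) (le_max_right _ _) z, ← hvl_self]
    rw [this]
    exact husolc.comp (continuous_id.max continuous_const)
  have hg_cont : ∀ z, Continuous fun σ => Real.exp (Df G z * σ) * Af G (vl σ) z :=
    fun z => (Real.continuous_exp.comp (continuous_const.mul continuous_id)).mul
      (Af_cont G hvl_cont z)
  have husol : IsHeatSolution G f usol := by
    refine ⟨?_, ?_, ⟨C', ?_⟩, ?_⟩
    · funext z
      simp [husoldef]
    · intro τ z hτ
      rw [husol_eq_vl τ hτ z]
      exact hvl_nonneg τ z
    · intro τ z hτ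
      rw [husol_eq_vl τ hτ z]
      exact hvlC τ z
    · intro z τ hτ
      have hW : HasDerivAt (fun r => ∫ σ in (0:ℝ)..r, Real.exp (Df G z * σ) * Af G (vl σ) z)
          (Real.exp (Df G z * τ) * Af G (vl τ) z) τ :=
        intervalIntegral.integral_hasDerivAt_right (hgint z 0 τ)
          ((hg_cont z).stronglyMeasurableAtFilter volume (𝓝 τ)) ((hg_cont z).continuousAt)
      have hexp : HasDerivAt (fun r => Real.exp (-(Df G z * r)))
          (Real.exp (-(Df G z * τ)) * (-(Df G z))) τ := by
        simpa using (((hasDerivAt_id τ).const_mul (Df G z)).neg).exp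
      have hprod := hexp.mul ((hasDerivAt_const τ (f z)).add hW)
      have h1 : Real.exp (-(Df G z * τ)) * Real.exp (Df G z * τ) = 1 := by
        rw [← Real.exp_add]; simp
      have heq : Real.exp (-(Df G z * τ)) * (-(Df G z)) *
            (f z + ∫ σ in (0:ℝ)..τ, Real.exp (Df G z * σ) * Af G (vl σ) z) +
            Real.exp (-(Df G z * τ)) * (0 + Real.exp (Df G z * τ) * Af G (vl τ) z)
          = G.lap (usol τ) z := by
        rw [lap_eq, Af_congr G (fun y => husol_eq_vl τ hτ y) z, husoldef]
        simp only []
        linear_combination (Af G (vl τ) z) * h1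
      simp only [Pi.add_apply] at hprod
      rw [heq] at hprod
      exact hprod.hasDerivWithinAt
  calc P t f x ≤ usol t x := minP usol husol t x ht
  _ = vl t x := husol_eq_vl t ht x
  _ ≤ u t x := hvl_le_u t ht x
section Plemmas

variable {P : ℝ → (V → ℝ) → V → ℝ}

lemma Pnonneg (hP : IsHeatSemigroup G P) {f : V → ℝ} (hf0 : ∀ x, 0 ≤ f x)
    (hfb : ∃ C, ∀ x, f x ≤ C) {t : ℝ} (ht : 0 ≤ t) (x : V) : 0 ≤ P t f x :=
  (hP.1 f hf0 hfb).1.2.1 t x ht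

lemma Pzero (hP : IsHeatSemigroup G P) {f : V → ℝ} (hf0 : ∀ x, 0 ≤ f x)
    (hfb : ∃ C, ∀ x, f x ≤ C) (x : V) : P 0 f x = f x := by
  have := (hP.1 f hf0 hfb).1.1
  exact congrFun this x

lemma Pmono (hP : IsHeatSemigroup G P) {f g : V → ℝ} (hf0 : ∀ x, 0 ≤ f x)
    (hfb : ∃ C, ∀ x, f x ≤ C) (hg0 : ∀ x, 0 ≤ g x) (hgb : ∃ C, ∀ x, g x ≤ C)
    (hfg : ∀ x, f x ≤ g x) {t : ℝ} (ht : 0 ≤ t) (x : V) : P t f x ≤ P t g x :=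
  comp G hP hf0 hfb (hP.1 g hg0 hgb).1 hfg ht x

lemma lap_add (a b : V → ℝ) (x : V) :
    G.lap (fun y => a y + b y) x = G.lap a x + G.lap b x := by
  have hAf : Af G (fun y => a y + b y) x = Af G a x + Af G b x := by
    simp only [Af, mul_add, Finset.sum_add_distrib, add_div]
  rw [lap_eq, lap_eq, lap_eq, hAf]
  ring

lemma lap_smul (c : ℝ) (a : V → ℝ) (x : V) :
    G.lap (fun y => c * a y) x = c * G.lap a x := by
  have hAf : Af G (fun y => c * a y) x = c * Af G a x := by
    have hsum : (∑ y ∈ nbr G x, G.w x y * (c * a y)) = c * ∑ y ∈ nbr G x, G.w x y * a y := by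
      rw [Finset.mul_sum]
      exact Finset.sum_congr rfl fun y _ => by ring
    rw [Af, Af, hsum, mul_div_assoc]
  rw [lap_eq, lap_eq, hAf]
  ring

lemma Psubadd (hP : IsHeatSemigroup G P) {a b : V → ℝ} (ha0 : ∀ x, 0 ≤ a x)
    {Ca : ℝ} (hab : ∀ x, a x ≤ Ca) (hb0 : ∀ x, 0 ≤ b x) {Cb : ℝ} (hbb : ∀ x, b x ≤ Cb)
    {t : ℝ} (ht : 0 ≤ t) (x : V) :
    P t (fun y => a y + b y) x ≤ P t a x + P t b x := by
  have sa := (hP.1 a ha0 ⟨Ca, hab⟩).1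
  have sb := (hP.1 b hb0 ⟨Cb, hbb⟩).1
  obtain ⟨Da, hDa⟩ := sa.2.2.1
  obtain ⟨Db, hDb⟩ := sb.2.2.1
  have hsol : IsHeatSolution G (fun y => a y + b y) (fun t x => P t a x + P t b x) := by
    refine ⟨?_, ?_, ⟨Da + Db, ?_⟩, ?_⟩
    · funext y
      show P 0 a y + P 0 b y = a y + b y
      rw [show P 0 a = a from sa.1, show P 0 b = b from sb.1]
    · exact fun τ y hτ => add_nonneg (sa.2.1 τ y hτ) (sb.2.1 τ y hτ)
    · exact fun τ y hτ => add_le_add (hDa τ y hτ) (hDb τ y hτ)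
    · intro y τ hτ
      have := (sa.2.2.2 y τ hτ).add (sb.2.2.2 y τ hτ)
      rwa [← lap_add] at this
  exact (hP.1 _ (fun y => add_nonneg (ha0 y) (hb0 y))
    ⟨Ca + Cb, fun y => add_le_add (hab y) (hbb y)⟩).2 _ hsol t x ht

lemma Psmul (hP : IsHeatSemigroup G P) {a : V → ℝ} (ha0 : ∀ x, 0 ≤ a x)
    {Ca : ℝ} (hab : ∀ x, a x ≤ Ca) {c : ℝ} (hc : 0 ≤ c)
    {t : ℝ} (ht : 0 ≤ t) (x : V) :
    P t (fun y => c * a y) x ≤ c * P t a x := by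
  have sa := (hP.1 a ha0 ⟨Ca, hab⟩).1
  obtain ⟨Da, hDa⟩ := sa.2.2.1
  have hDa0 : ∀ τ y, 0 ≤ τ → P τ a y ≤ max Da 0 := fun τ y hτ =>
    (hDa τ y hτ).trans (le_max_left _ _)
  have hsol : IsHeatSolution G (fun y => c * a y) (fun t x => c * P t a x) := by
    refine ⟨?_, ?_, ⟨c * max Da 0, ?_⟩, ?_⟩
    · funext y
      show c * P 0 a y = c * a y
      rw [show P 0 a = a from sa.1]
    · exact fun τ y hτ => mul_nonneg hc (sa.2.1 τ y hτ)
    · exact fun τ y hτ => mul_le_mul_of_nonneg_left (hDa0 τ y hτ) hc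
    · intro y τ hτ
      have := (sa.2.2.2 y τ hτ).const_mul c
      rwa [← lap_smul] at this
  exact (hP.1 _ (fun y => mul_nonneg hc (ha0 y))
    ⟨c * Ca, fun y => mul_le_mul_of_nonneg_left (hab y) hc⟩).2 _ hsol t x ht

/-- easy direction of the semigroup law -/
lemma Psemi_le (hP : IsHeatSemigroup G P) {f : V → ℝ} (hf0 : ∀ x, 0 ≤ f x)
    (hfb : ∃ C, ∀ x, f x ≤ C) {s t : ℝ} (hs : 0 ≤ s) (ht : 0 ≤ t) (x : V) :
    P t (P s f) x ≤ P (t + s) f x := by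
  have sf := (hP.1 f hf0 hfb).1
  obtain ⟨Df', hDf⟩ := sf.2.2.1
  have hsol : IsHeatSolution G (P s f) (fun r x => P (r + s) f x) := by
    refine ⟨?_, ?_, ⟨Df', ?_⟩, ?_⟩
    · funext y
      show P (0 + s) f y = P s f y
      rw [zero_add]
    · exact fun τ y hτ => sf.2.1 (τ + s) y (add_nonneg hτ hs)
    · exact fun τ y hτ => hDf (τ + s) y (add_nonneg hτ hs)
    · intro y τ hτ
      have h := sf.2.2.2 y (τ + s) (add_nonneg hτ hs)
      have hshift : HasDerivWithinAt (fun r : ℝ => r + s) 1 (Ici 0) τ :=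
        ((hasDerivAt_id τ).add_const s).hasDerivWithinAt
      have := HasDerivWithinAt.comp τ h hshift (fun r (hr : r ∈ Ici (0:ℝ)) =>
        (add_nonneg hr hs : (0:ℝ) ≤ r + s))
      simpa [Function.comp_def] using this
  exact (hP.1 (P s f) (fun y => sf.2.1 s y hs) ⟨Df', fun y => hDf s y hs⟩).2 _ hsol t x ht

end Plemmas
section Qlemmas

variable {P : ℝ → (V → ℝ) → V → ℝ} {φ : V → ℝ}

lemma gbdd {g : V → ℝ} (hφb : ∃ C, ∀ x, φ x ≤ C) (hgφ : ∀ x, g x ≤ φ x) :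
    ∃ C, ∀ x, g x ≤ C := by
  obtain ⟨C, hC⟩ := hφb
  exact ⟨C, fun x => (hgφ x).trans (hC x)⟩

lemma Qnonneg (hP : IsHeatSemigroup G P) (hφ0 : ∀ x, 0 ≤ φ x) (hφb : ∃ C, ∀ x, φ x ≤ C)
    {g : V → ℝ} (hg0 : ∀ x, 0 ≤ g x) (hgφ : ∀ x, g x ≤ φ x) {t : ℝ} (ht : 0 ≤ t) (x : V) :
    0 ≤ Qcut G P φ t g x :=
  le_min (Pnonneg G hP hg0 (gbdd hφb hgφ) ht x) (hφ0 x)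

lemma Qleφ {g : V → ℝ} {t : ℝ} (x : V) : Qcut G P φ t g x ≤ φ x := min_le_right _ _

lemma QleP {g : V → ℝ} {t : ℝ} (x : V) : Qcut G P φ t g x ≤ P t g x := min_le_left _ _

lemma Qmono (hP : IsHeatSemigroup G P) (hφb : ∃ C, ∀ x, φ x ≤ C)
    {g h : V → ℝ} (hg0 : ∀ x, 0 ≤ g x) (hgφ : ∀ x, g x ≤ φ x)
    (hh0 : ∀ x, 0 ≤ h x) (hhφ : ∀ x, h x ≤ φ x) (hgh : ∀ x, g x ≤ h x)
    {t : ℝ} (ht : 0 ≤ t) (x : V) : Qcut G P φ t g x ≤ Qcut G P φ t h x :=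
  min_le_min (Pmono G hP hg0 (gbdd hφb hgφ) hh0 (gbdd hφb hhφ) hgh ht x) le_rfl

lemma Qzero (hP : IsHeatSemigroup G P) (hφb : ∃ C, ∀ x, φ x ≤ C)
    {g : V → ℝ} (hg0 : ∀ x, 0 ≤ g x) (hgφ : ∀ x, g x ≤ φ x) (x : V) :
    Qcut G P φ 0 g x = g x := by
  rw [Qcut, Pzero G hP hg0 (gbdd hφb hgφ) x]
  exact min_eq_left (hgφ x)

lemma Qcomp (hP : IsHeatSemigroup G P) (hφ0 : ∀ x, 0 ≤ φ x) (hφb : ∃ C, ∀ x, φ x ≤ C)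
    {g : V → ℝ} (hg0 : ∀ x, 0 ≤ g x) (hgφ : ∀ x, g x ≤ φ x)
    {a b : ℝ} (ha : 0 ≤ a) (hb : 0 ≤ b) (x : V) :
    Qcut G P φ a (Qcut G P φ b g) x ≤ Qcut G P φ (a + b) g x := by
  have hgb := gbdd hφb hgφ
  obtain ⟨C, hC⟩ := (hP.1 g hg0 hgb).1.2.2.1
  have h1 : P a (Qcut G P φ b g) x ≤ P a (P b g) x := by
    refine Pmono G hP ?_ ?_ ?_ ?_ ?_ ha x
    · exact fun y => Qnonneg G hP hφ0 hφb hg0 hgφ hb y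
    · exact gbdd hφb (fun y => Qleφ G y)
    · exact fun y => Pnonneg G hP hg0 hgb hb y
    · exact ⟨C, fun y => hC b y hb⟩
    · exact fun y => QleP G y
  have h2 : P a (P b g) x ≤ P (a + b) g x := Psemi_le G hP hg0 hgb hb ha x
  exact min_le_min (h1.trans h2) le_rfl

end Qlemmas
section QLlemmas

variable {P : ℝ → (V → ℝ) → V → ℝ} {φ : V → ℝ}

/-- iterated cutoff operator along a list of times -/
noncomputable def QL (P : ℝ → (V → ℝ) → V → ℝ) (φ : V → ℝ) (l : List ℝ) (g : V → ℝ) : V → ℝ :=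
  l.foldr (fun s g => Qcut G P φ s g) g

lemma QL_nil (g : V → ℝ) : QL G P φ [] g = g := rfl

lemma QL_cons (a : ℝ) (l : List ℝ) (g : V → ℝ) :
    QL G P φ (a :: l) g = Qcut G P φ a (QL G P φ l g) := rfl

lemma QL_append (l₁ l₂ : List ℝ) (g : V → ℝ) :
    QL G P φ (l₁ ++ l₂) g = QL G P φ l₁ (QL G P φ l₂ g) := by
  simp only [QL, List.foldr_append]

lemma QLmem (hP : IsHeatSemigroup G P) (hφ0 : ∀ x, 0 ≤ φ x) (hφb : ∃ C, ∀ x, φ x ≤ C)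
    {l : List ℝ} (hl : ∀ u ∈ l, 0 ≤ u) {g : V → ℝ} (hg0 : ∀ x, 0 ≤ g x)
    (hgφ : ∀ x, g x ≤ φ x) :
    (∀ x, 0 ≤ QL G P φ l g x) ∧ (∀ x, QL G P φ l g x ≤ φ x) := by
  induction l with
  | nil => exact ⟨hg0, hgφ⟩
  | cons a l ih =>
    have hih := ih (fun u hu => hl u (List.mem_cons_of_mem a hu))
    rw [QL_cons]
    exact ⟨fun x => Qnonneg G hP hφ0 hφb hih.1 hih.2 (hl a (List.mem_cons_self)) x,
      fun x => Qleφ G x⟩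

lemma QLmono (hP : IsHeatSemigroup G P) (hφ0 : ∀ x, 0 ≤ φ x) (hφb : ∃ C, ∀ x, φ x ≤ C)
    {l : List ℝ} (hl : ∀ u ∈ l, 0 ≤ u) {g h : V → ℝ} (hg0 : ∀ x, 0 ≤ g x)
    (hgφ : ∀ x, g x ≤ φ x) (hh0 : ∀ x, 0 ≤ h x) (hhφ : ∀ x, h x ≤ φ x)
    (hgh : ∀ x, g x ≤ h x) :
    ∀ x, QL G P φ l g x ≤ QL G P φ l h x := by
  induction l with
  | nil => exact hgh
  | cons a l ih =>
    have hl' := fun u hu => hl u (List.mem_cons_of_mem a hu)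
    have ha := hl a (List.mem_cons_self)
    have hg' := QLmem G hP hφ0 hφb hl' hg0 hgφ
    have hh' := QLmem G hP hφ0 hφb hl' hh0 hhφ
    intro x
    rw [QL_cons, QL_cons]
    exact Qmono G hP hφb hg'.1 hg'.2 hh'.1 hh'.2 (ih hl') ha x

lemma QLzeros (hP : IsHeatSemigroup G P) (hφb : ∃ C, ∀ x, φ x ≤ C)
    {l : List ℝ} (hl : ∀ u ∈ l, 0 ≤ u) (hsum : l.sum = 0) {g : V → ℝ}
    (hg0 : ∀ x, 0 ≤ g x) (hgφ : ∀ x, g x ≤ φ x) :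
    ∀ x, QL G P φ l g x = g x := by
  induction l with
  | nil => exact fun x => rfl
  | cons a l ih =>
    have hl' := fun u hu => hl u (List.mem_cons_of_mem a hu)
    have ha := hl a (List.mem_cons_self)
    have hsl : l.sum = 0 ∧ a = 0 := by
      have h0 : 0 ≤ l.sum := List.sum_nonneg hl'
      rw [List.sum_cons] at hsum
      constructor <;> linarith
    have hihx := ih hl' hsl.1
    intro x
    rw [QL_cons, hsl.2]
    have : Qcut G P φ 0 (QL G P φ l g) x = QL G P φ l g x :=
      Qzero G hP hφb (fun y => (hihx y) ▸ hg0 y) (fun y => (hihx y) ▸ hgφ y) x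
    rw [this, hihx x]

variable {χ : V → ℝ} {Cχ : ℝ}

lemma Qerr (hP : IsHeatSemigroup G P) (hφ0 : ∀ x, 0 ≤ φ x) (hφb : ∃ C, ∀ x, φ x ≤ C)
    (hχ0 : ∀ x, 0 ≤ χ x) (hχ1 : ∀ x, χ x ≤ 1) (hχeq : ∀ x, φ x ≠ 0 → χ x = 1)
    (hχz : ∀ x, φ x = 0 → χ x = 0) (hCχ1 : 1 ≤ Cχ) (hCχ : ∀ t, 0 ≤ t → ∀ x, P t χ x ≤ Cχ)
    {g h : V → ℝ} (hg0 : ∀ x, 0 ≤ g x) (hgφ : ∀ x, g x ≤ φ x)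
    (hh0 : ∀ x, 0 ≤ h x) (hhφ : ∀ x, h x ≤ φ x) {δ : ℝ} (hδ : 0 ≤ δ)
    (hgh : ∀ y, g y ≤ h y + δ * χ y) {t : ℝ} (ht : 0 ≤ t) (x : V) :
    Qcut G P φ t g x ≤ Qcut G P φ t h x + (δ * Cχ) * χ x := by
  have hCχ0 : (0:ℝ) ≤ Cχ := le_trans zero_le_one hCχ1
  by_cases hx : φ x = 0
  · rw [hχz x hx, mul_zero, add_zero]
    calc Qcut G P φ t g x ≤ φ x := Qleφ G x
    _ = 0 := hx
    _ ≤ Qcut G P φ t h x := Qnonneg G hP hφ0 hφb hh0 hhφ ht x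
  · rw [hχeq x hx, mul_one]
    obtain ⟨Cφ, hCφ⟩ := hφb
    have hchain : P t g x ≤ P t h x + δ * Cχ := by
      have h1 : P t g x ≤ P t (fun y => h y + δ * χ y) x := by
        refine Pmono G hP hg0 (gbdd ⟨Cφ, hCφ⟩ hgφ) ?_ ?_ hgh ht x
        · exact fun y => add_nonneg (hh0 y) (mul_nonneg hδ (hχ0 y))
        · exact ⟨Cφ + δ, fun y => add_le_add ((hhφ y).trans (hCφ y))
            (by nlinarith [hχ1 y, hχ0 y])⟩
      have h2 : P t (fun y => h y + δ * χ y) x ≤ P t h x + P t (fun y => δ * χ y) x :=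
        Psubadd G hP hh0 (fun y => (hhφ y).trans (hCφ y))
          (fun y => mul_nonneg hδ (hχ0 y)) (Cb := δ)
          (fun y => by nlinarith [hχ1 y, hχ0 y]) ht x
      have h3 : P t (fun y => δ * χ y) x ≤ δ * P t χ x :=
        Psmul G hP hχ0 hχ1 hδ ht x
      have h4 : δ * P t χ x ≤ δ * Cχ := mul_le_mul_of_nonneg_left (hCχ t ht x) hδ
      linarith
    have hδC : 0 ≤ δ * Cχ := mul_nonneg hδ hCχ0
    calc Qcut G P φ t g x = min (P t g x) (φ x) := rfl
    _ ≤ min (P t h x + δ * Cχ) (φ x + δ * Cχ) :=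
        min_le_min hchain (le_add_of_nonneg_right hδC)
    _ = min (P t h x) (φ x) + δ * Cχ := (min_add_add_right _ _ _)
    _ = Qcut G P φ t h x + δ * Cχ := rfl

lemma QLerr (hP : IsHeatSemigroup G P) (hφ0 : ∀ x, 0 ≤ φ x) (hφb : ∃ C, ∀ x, φ x ≤ C)
    (hχ0 : ∀ x, 0 ≤ χ x) (hχ1 : ∀ x, χ x ≤ 1) (hχeq : ∀ x, φ x ≠ 0 → χ x = 1)
    (hχz : ∀ x, φ x = 0 → χ x = 0) (hCχ1 : 1 ≤ Cχ) (hCχ : ∀ t, 0 ≤ t → ∀ x, P t χ x ≤ Cχ)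
    {l : List ℝ} (hl : ∀ u ∈ l, 0 ≤ u)
    {g h : V → ℝ} (hg0 : ∀ x, 0 ≤ g x) (hgφ : ∀ x, g x ≤ φ x)
    (hh0 : ∀ x, 0 ≤ h x) (hhφ : ∀ x, h x ≤ φ x) {δ : ℝ} (hδ : 0 ≤ δ)
    (hgh : ∀ y, g y ≤ h y + δ * χ y) :
    ∀ x, QL G P φ l g x ≤ QL G P φ l h x + (δ * Cχ ^ l.length) * χ x := by
  induction l with
  | nil =>
    intro x
    simpa [QL_nil] using hgh x
  | cons a l ih =>
    have hl' := fun u hu => hl u (List.mem_cons_of_mem a hu)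
    have ha := hl a (List.mem_cons_self)
    have hg' := QLmem G hP hφ0 hφb hl' hg0 hgφ
    have hh' := QLmem G hP hφ0 hφb hl' hh0 hhφ
    intro x
    have step := Qerr G hP hφ0 hφb hχ0 hχ1 hχeq hχz hCχ1 hCχ hg'.1 hg'.2 hh'.1 hh'.2
      (mul_nonneg hδ (pow_nonneg (le_trans zero_le_one hCχ1) l.length)) (ih hl') ha x
    rw [QL_cons, QL_cons]
    refine step.trans ?_
    have : δ * Cχ ^ l.length * Cχ = δ * Cχ ^ (a :: l).length := by
      rw [List.length_cons, pow_succ]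
      ring
    rw [← this]

end QLlemmas
section Combinatorics

variable {P : ℝ → (V → ℝ) → V → ℝ} {φ : V → ℝ}

/-- common refinement of two decompositions of the same time -/
lemma refine2 (hP : IsHeatSemigroup G P) (hφ0 : ∀ x, 0 ≤ φ x) (hφb : ∃ C, ∀ x, φ x ≤ C) :
    ∀ (n : ℕ) (a b : List ℝ), a.length + b.length ≤ n → (∀ u ∈ a, 0 ≤ u) →
    (∀ u ∈ b, 0 ≤ u) → a.sum = b.sum →
    ∃ c : List ℝ, (∀ u ∈ c, 0 ≤ u) ∧ c.sum = a.sum ∧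
      ∀ g : V → ℝ, (∀ x, 0 ≤ g x) → (∀ x, g x ≤ φ x) →
        ∀ x, QL G P φ c g x ≤ QL G P φ a g x ∧ QL G P φ c g x ≤ QL G P φ b g x := by
  intro n
  induction n with
  | zero =>
    intro a b hlen ha hb hab
    have ha0 : a = [] := List.length_eq_zero_iff.mp (Nat.le_zero.mp (le_trans (Nat.le_add_right _ _) hlen))
    have hb0 : b = [] := List.length_eq_zero_iff.mp (Nat.le_zero.mp (le_trans (Nat.le_add_left _ _) hlen))
    subst ha0; subst hb0
    exact ⟨[], by simp, by simp, fun g hg0 hgφ x => ⟨le_rfl, le_rfl⟩⟩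
  | succ n ih =>
    intro a b hlen ha hb hab
    match a, b with
    | [], b =>
      have hbz : b.sum = 0 := by simpa using hab.symm
      refine ⟨[], by simp, by simp, fun g hg0 hgφ x => ?_⟩
      have := QLzeros G hP hφb hb hbz hg0 hgφ x
      exact ⟨le_rfl, by rw [QL_nil, this]⟩
    | (α :: a'), [] =>
      have haz : (α :: a').sum = 0 := by simpa using hab
      refine ⟨[], by simp [haz], by simp [haz], fun g hg0 hgφ x => ?_⟩
      have := QLzeros G hP hφb ha haz hg0 hgφ x
      exact ⟨by rw [QL_nil, this], le_rfl⟩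
    | (α :: a'), (β :: b') =>
      have ha' := fun u hu => ha u (List.mem_cons_of_mem α hu)
      have hb' := fun u hu => hb u (List.mem_cons_of_mem β hu)
      have hα := ha α (List.mem_cons_self)
      have hβ := hb β (List.mem_cons_self)
      rw [List.sum_cons, List.sum_cons] at hab
      rcases le_total α β with hαβ | hβα
      · -- recurse on a' vs (β - α) :: b'
        have hlen' : a'.length + ((β - α) :: b').length ≤ n := by
          simp only [List.length_cons] at hlen ⊢
          omega
        have hsum' : a'.sum = ((β - α) :: b').sum := by
          rw [List.sum_cons]; linarith
        obtain ⟨c', hc'0, hc'sum, hc'le⟩ := ih a' ((β - α) :: b') hlen'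
          ha' (by
            intro u hu
            rcases List.mem_cons.mp hu with h | h
            · rw [h]; linarith
            · exact hb' u h) hsum'
        refine ⟨α :: c', ?_, ?_, ?_⟩
        · intro u hu
          rcases List.mem_cons.mp hu with h | h
          · rw [h]; exact hα
          · exact hc'0 u h
        · rw [List.sum_cons, List.sum_cons, hc'sum]
        · intro g hg0 hgφ x
          have hc'mem := QLmem G hP hφ0 hφb hc'0 hg0 hgφ
          have ha'mem := QLmem G hP hφ0 hφb ha' hg0 hgφ
          have hb'mem := QLmem G hP hφ0 hφb hb' hg0 hgφ
          constructor
          · rw [QL_cons, QL_cons]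
            exact Qmono G hP hφb hc'mem.1 hc'mem.2 ha'mem.1 ha'mem.2
              (fun y => (hc'le g hg0 hgφ y).1) hα x
          · rw [QL_cons]
            have hbcnn : ∀ u ∈ ((β - α) :: b'), (0:ℝ) ≤ u := by
              intro u hu
              rcases List.mem_cons.mp hu with h | h
              · rw [h]; linarith
              · exact hb' u h
            have h1 : Qcut G P φ α (QL G P φ c' g) x ≤
                Qcut G P φ α (QL G P φ ((β - α) :: b') g) x := by
              have hbc := QLmem G hP hφ0 hφb hbcnn hg0 hgφ
              exact Qmono G hP hφb hc'mem.1 hc'mem.2 hbc.1 hbc.2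
                (fun y => (hc'le g hg0 hgφ y).2) hα x
            have h2 : Qcut G P φ α (QL G P φ ((β - α) :: b') g) x ≤ QL G P φ (β :: b') g x := by
              rw [QL_cons, QL_cons]
              have := Qcomp G hP hφ0 hφb hb'mem.1 hb'mem.2 hα (by linarith : (0:ℝ) ≤ β - α) x
              rwa [show α + (β - α) = β by ring] at this
            exact h1.trans h2
      · -- recurse on (α - β) :: a' vs b'
        have hlen' : ((α - β) :: a').length + b'.length ≤ n := by
          simp only [List.length_cons] at hlen ⊢
          omega
        have hsum' : ((α - β) :: a').sum = b'.sum := by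
          rw [List.sum_cons]; linarith
        obtain ⟨c', hc'0, hc'sum, hc'le⟩ := ih ((α - β) :: a') b' hlen'
          (by
            intro u hu
            rcases List.mem_cons.mp hu with h | h
            · rw [h]; linarith
            · exact ha' u h) hb' hsum'
        refine ⟨β :: c', ?_, ?_, ?_⟩
        · intro u hu
          rcases List.mem_cons.mp hu with h | h
          · rw [h]; exact hβ
          · exact hc'0 u h
        · rw [List.sum_cons, List.sum_cons]
          rw [hc'sum, List.sum_cons] at *
          linarith [hsum']
        · intro g hg0 hgφ x
          have hc'mem := QLmem G hP hφ0 hφb hc'0 hg0 hgφ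
          have ha'mem := QLmem G hP hφ0 hφb ha' hg0 hgφ
          have hb'mem := QLmem G hP hφ0 hφb hb' hg0 hgφ
          constructor
          · rw [QL_cons]
            have hacnn : ∀ u ∈ ((α - β) :: a'), (0:ℝ) ≤ u := by
              intro u hu
              rcases List.mem_cons.mp hu with h | h
              · rw [h]; linarith
              · exact ha' u h
            have h1 : Qcut G P φ β (QL G P φ c' g) x ≤
                Qcut G P φ β (QL G P φ ((α - β) :: a') g) x := by
              have hac := QLmem G hP hφ0 hφb hacnn hg0 hgφ
              exact Qmono G hP hφb hc'mem.1 hc'mem.2 hac.1 hac.2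
                (fun y => (hc'le g hg0 hgφ y).1) hβ x
            have h2 : Qcut G P φ β (QL G P φ ((α - β) :: a') g) x ≤ QL G P φ (α :: a') g x := by
              rw [QL_cons, QL_cons]
              have := Qcomp G hP hφ0 hφb ha'mem.1 ha'mem.2 hβ (by linarith : (0:ℝ) ≤ α - β) x
              rwa [show β + (α - β) = α by ring] at this
            exact h1.trans h2
          · rw [QL_cons, QL_cons]
            exact Qmono G hP hφb hc'mem.1 hc'mem.2 hb'mem.1 hb'mem.2
              (fun y => (hc'le g hg0 hgφ y).2) hβ x

/-- splitting a decomposition of `t + s` into decompositions of `t` and `s` -/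
lemma splitAt (hP : IsHeatSemigroup G P) (hφ0 : ∀ x, 0 ≤ φ x) (hφb : ∃ C, ∀ x, φ x ≤ C) :
    ∀ (l : List ℝ) (t s : ℝ), 0 ≤ t → 0 ≤ s → (∀ u ∈ l, 0 ≤ u) → l.sum = t + s →
    ∃ l₁ l₂ : List ℝ, (∀ u ∈ l₁, 0 ≤ u) ∧ (∀ u ∈ l₂, 0 ≤ u) ∧ l₁.sum = t ∧ l₂.sum = s ∧
      ∀ g : V → ℝ, (∀ x, 0 ≤ g x) → (∀ x, g x ≤ φ x) →
        ∀ x, QL G P φ (l₁ ++ l₂) g x ≤ QL G P φ l g x := by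
  intro l
  induction l with
  | nil =>
    intro t s ht hs hl hsum
    have ht0 : t = 0 := by
      have : t + s = 0 := by simpa using hsum.symm
      linarith
    have hs0 : s = 0 := by
      have : t + s = 0 := by simpa using hsum.symm
      linarith
    exact ⟨[], [], by simp, by simp, by simp [ht0], by simp [hs0],
      fun g hg0 hgφ x => le_rfl⟩
  | cons a l ih =>
    intro t s ht hs hl hsum
    have hl' := fun u hu => hl u (List.mem_cons_of_mem a hu)
    have ha := hl a (List.mem_cons_self)
    rw [List.sum_cons] at hsum
    rcases le_total a t with hat | hta
    · obtain ⟨l₁, l₂, h₁0, h₂0, h₁s, h₂s, hle⟩ := ih (t - a) s (by linarith) hs hl'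
        (by linarith)
      refine ⟨a :: l₁, l₂, ?_, h₂0, ?_, h₂s, ?_⟩
      · intro u hu
        rcases List.mem_cons.mp hu with h | h
        · rw [h]; exact ha
        · exact h₁0 u h
      · rw [List.sum_cons, h₁s]; ring
      · intro g hg0 hgφ x
        have h1 : QL G P φ ((a :: l₁) ++ l₂) g x = Qcut G P φ a (QL G P φ (l₁ ++ l₂) g) x := rfl
        rw [h1, QL_cons]
        have hmem1 := QLmem G hP hφ0 hφb (fun u hu => by
          rcases List.mem_append.mp hu with h | h
          · exact h₁0 u h
          · exact h₂0 u h) hg0 hgφ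
        have hmem2 := QLmem G hP hφ0 hφb hl' hg0 hgφ
        exact Qmono G hP hφb hmem1.1 hmem1.2 hmem2.1 hmem2.2
          (fun y => hle g hg0 hgφ y) ha x
    · refine ⟨[t], (a - t) :: l, ?_, ?_, by simp, ?_, ?_⟩
      · intro u hu
        rw [List.mem_singleton] at hu
        rw [hu]; exact ht
      · intro u hu
        rcases List.mem_cons.mp hu with h | h
        · rw [h]; linarith
        · exact hl' u h
      · rw [List.sum_cons]; linarith
      · intro g hg0 hgφ x
        have hmem := QLmem G hP hφ0 hφb hl' hg0 hgφ
        have h1 : QL G P φ ([t] ++ (a - t) :: l) g x =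
            Qcut G P φ t (Qcut G P φ (a - t) (QL G P φ l g)) x := rfl
        rw [h1, QL_cons]
        have := Qcomp G hP hφ0 hφb hmem.1 hmem.2 ht (by linarith : (0:ℝ) ≤ a - t) x
        rwa [show t + (a - t) = a by ring] at this

end Combinatorics
section PcutLemmas

variable {P : ℝ → (V → ℝ) → V → ℝ} {φ : V → ℝ}

lemma Pcut_def (P : ℝ → (V → ℝ) → V → ℝ) (φ : V → ℝ) (t : ℝ) (g : V → ℝ) (x : V) :
    Pcut G P φ t g x = sInf {c | ∃ l : List ℝ, (∀ u ∈ l, 0 ≤ u) ∧ l.sum = t ∧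
      c = QL G P φ l g x} := rfl

lemma PcutSet_nonempty (P : ℝ → (V → ℝ) → V → ℝ) (φ : V → ℝ) {t : ℝ} (ht : 0 ≤ t)
    (g : V → ℝ) (x : V) :
    Set.Nonempty {c | ∃ l : List ℝ, (∀ u ∈ l, 0 ≤ u) ∧ l.sum = t ∧ c = QL G P φ l g x} := by
  refine ⟨QL G P φ [t] g x, [t], ?_, by simp, rfl⟩
  intro u hu
  rw [List.mem_singleton] at hu
  rw [hu]; exact ht

lemma PcutSet_bddBelow (hP : IsHeatSemigroup G P) (hφ0 : ∀ x, 0 ≤ φ x)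
    (hφb : ∃ C, ∀ x, φ x ≤ C) {g : V → ℝ} (hg0 : ∀ x, 0 ≤ g x) (hgφ : ∀ x, g x ≤ φ x)
    {t : ℝ} (x : V) :
    BddBelow {c | ∃ l : List ℝ, (∀ u ∈ l, 0 ≤ u) ∧ l.sum = t ∧ c = QL G P φ l g x} := by
  refine ⟨0, ?_⟩
  rintro c ⟨l, hl0, _, rfl⟩
  exact (QLmem G hP hφ0 hφb hl0 hg0 hgφ).1 x

lemma Pcut_le_QL (hP : IsHeatSemigroup G P) (hφ0 : ∀ x, 0 ≤ φ x)
    (hφb : ∃ C, ∀ x, φ x ≤ C) {g : V → ℝ} (hg0 : ∀ x, 0 ≤ g x) (hgφ : ∀ x, g x ≤ φ x)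
    {t : ℝ} {l : List ℝ} (hl0 : ∀ u ∈ l, 0 ≤ u) (hlsum : l.sum = t) (x : V) :
    Pcut G P φ t g x ≤ QL G P φ l g x := by
  rw [Pcut_def]
  exact csInf_le (PcutSet_bddBelow G hP hφ0 hφb hg0 hgφ x) ⟨l, hl0, hlsum, rfl⟩

lemma Pcut_nonneg (hP : IsHeatSemigroup G P) (hφ0 : ∀ x, 0 ≤ φ x)
    (hφb : ∃ C, ∀ x, φ x ≤ C) {g : V → ℝ} (hg0 : ∀ x, 0 ≤ g x) (hgφ : ∀ x, g x ≤ φ x)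
    {t : ℝ} (ht : 0 ≤ t) (x : V) : 0 ≤ Pcut G P φ t g x := by
  rw [Pcut_def]
  refine le_csInf (PcutSet_nonempty G P φ ht g x) ?_
  rintro c ⟨l, hl0, _, rfl⟩
  exact (QLmem G hP hφ0 hφb hl0 hg0 hgφ).1 x

lemma Pcut_leφ (hP : IsHeatSemigroup G P) (hφ0 : ∀ x, 0 ≤ φ x)
    (hφb : ∃ C, ∀ x, φ x ≤ C) {g : V → ℝ} (hg0 : ∀ x, 0 ≤ g x) (hgφ : ∀ x, g x ≤ φ x)
    {t : ℝ} (ht : 0 ≤ t) (x : V) : Pcut G P φ t g x ≤ φ x := by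
  have h1 : Pcut G P φ t g x ≤ QL G P φ [t] g x :=
    Pcut_le_QL G hP hφ0 hφb hg0 hgφ (by
      intro u hu
      rw [List.mem_singleton] at hu
      rw [hu]; exact ht) (by simp) x
  refine h1.trans ?_
  rw [show QL G P φ [t] g = Qcut G P φ t g from rfl]
  exact Qleφ G x

end PcutLemmas
end HeatAux

open HeatAux in
/-- The cutoff semigroup property: `P_t^φ P_s^φ f = P_{t+s}^φ f`. -/
theorem stmt6 {V : Type} [Countable V] (G : WeightedGraph V)
    (P : ℝ → (V → ℝ) → V → ℝ) (hP : IsHeatSemigroup G P)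
    (φ : V → ℝ) (hφ0 : ∀ x, 0 ≤ φ x) (hφfin : (Function.support φ).Finite)
    (f : V → ℝ) (hf0 : ∀ x, 0 ≤ f x) (hfφ : ∀ x, f x ≤ φ x)
    (s t : ℝ) (hs : 0 ≤ s) (ht : 0 ≤ t) :
    ∀ x, Pcut G P φ t (fun y => Pcut G P φ s f y) x = Pcut G P φ (t + s) f x := by
  -- φ is bounded
  have hφb : ∃ C, ∀ x, φ x ≤ C := by
    refine ⟨∑ y ∈ hφfin.toFinset, φ y, fun x => ?_⟩
    by_cases hx : φ x = 0
    · rw [hx]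
      exact Finset.sum_nonneg fun y _ => hφ0 y
    · exact Finset.single_le_sum (fun y _ => hφ0 y) (hφfin.mem_toFinset.mpr hx)
  -- the indicator of the support of φ
  set χ : V → ℝ := fun y => if φ y = 0 then 0 else 1 with hχdef
  have hχ0 : ∀ y, 0 ≤ χ y := fun y => by by_cases h : φ y = 0 <;> simp [hχdef, h]
  have hχ1 : ∀ y, χ y ≤ 1 := fun y => by by_cases h : φ y = 0 <;> simp [hχdef, h]
  have hχeq : ∀ y, φ y ≠ 0 → χ y = 1 := fun y h => by simp [hχdef, h]
  have hχz : ∀ y, φ y = 0 → χ y = 0 := fun y h => by simp [hχdef, h]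
  obtain ⟨Cχ₀, hCχ₀⟩ := (hP.1 χ hχ0 ⟨1, hχ1⟩).1.2.2.1
  set Cχ : ℝ := max Cχ₀ 1 with hCχdef
  have hCχ1 : 1 ≤ Cχ := le_max_right _ _
  have hCχ : ∀ τ, 0 ≤ τ → ∀ x, P τ χ x ≤ Cχ := fun τ hτ x =>
    (hCχ₀ τ x hτ).trans (le_max_left _ _)
  set gs : V → ℝ := fun y => Pcut G P φ s f y with hgsdef
  have hgs0 : ∀ y, 0 ≤ gs y := fun y => Pcut_nonneg G hP hφ0 hφb hf0 hfφ hs y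
  have hgsφ : ∀ y, gs y ≤ φ y := fun y => Pcut_leφ G hP hφ0 hφb hf0 hfφ hs y
  intro x
  apply le_antisymm
  · -- Pcut t gs ≤ Pcut (t+s) f
    rw [Pcut_def G P φ (t + s) f x]
    refine le_csInf (PcutSet_nonempty G P φ (add_nonneg ht hs) f x) ?_
    rintro c ⟨l'', hl''0, hl''sum, rfl⟩
    obtain ⟨l₁, l₂, h₁0, h₂0, h₁s, h₂s, hsplit⟩ :=
      splitAt G hP hφ0 hφb l'' t s ht hs hl''0 hl''sum
    have h1 : Pcut G P φ t gs x ≤ QL G P φ l₁ gs x :=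
      Pcut_le_QL G hP hφ0 hφb hgs0 hgsφ h₁0 h₁s x
    have h2 : ∀ y, gs y ≤ QL G P φ l₂ f y := fun y =>
      Pcut_le_QL G hP hφ0 hφb hf0 hfφ h₂0 h₂s y
    have hl₂mem := QLmem G hP hφ0 hφb h₂0 hf0 hfφ
    have h3 : QL G P φ l₁ gs x ≤ QL G P φ l₁ (QL G P φ l₂ f) x :=
      QLmono G hP hφ0 hφb h₁0 hgs0 hgsφ hl₂mem.1 hl₂mem.2 h2 x
    have h4 : QL G P φ l₁ (QL G P φ l₂ f) x = QL G P φ (l₁ ++ l₂) f x :=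
      (congrFun (QL_append G l₁ l₂ f) x).symm
    exact h1.trans (h3.trans (h4.le.trans (hsplit f hf0 hfφ x)))
  · -- Pcut (t+s) f ≤ Pcut t gs
    rw [Pcut_def G P φ t gs x]
    refine le_csInf (PcutSet_nonempty G P φ ht gs x) ?_
    rintro c ⟨l, hl0, hlsum, rfl⟩
    -- it suffices to prove the bound up to ε
    have hsuff : ∀ ε : ℝ, 0 < ε →
        Pcut G P φ (t + s) f x ≤ QL G P φ l gs x + ε := by
      intro ε hε
      set Cn : ℝ := Cχ ^ l.length with hCndef
      have hCn1 : 1 ≤ Cn := one_le_pow₀ hCχ1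
      have hCn0 : 0 < Cn := lt_of_lt_of_le one_pos hCn1
      set δ : ℝ := ε / Cn with hδdef
      have hδpos : 0 < δ := div_pos hε hCn0
      -- a single decomposition of s that approximates Pcut s f on the support of φ
      have Kcomb : ∀ F : Finset V, ∃ lF : List ℝ, (∀ u ∈ lF, 0 ≤ u) ∧ lF.sum = s ∧
          ∀ y ∈ F, QL G P φ lF f y < gs y + δ := by
        intro F
        classical
        induction F using Finset.induction_on with
        | empty =>
          refine ⟨[s], ?_, by simp, by simp⟩
          intro u hu
          rw [List.mem_singleton] at hu
          rw [hu]; exact hs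
        | @insert y F hy ih =>
          obtain ⟨l₁, v₁, sum₁, h₁⟩ := ih
          have hlt : Pcut G P φ s f y < Pcut G P φ s f y + δ := lt_add_of_pos_right _ hδpos
          rw [Pcut_def G P φ s f y] at hlt
          obtain ⟨c₂, ⟨l₂, hl₂0, hl₂s, rfl⟩, hclt⟩ :=
            exists_lt_of_csInf_lt (PcutSet_nonempty G P φ hs f y) hlt
          obtain ⟨c', hc'0, hc'sum, hc'le⟩ := refine2 G hP hφ0 hφb
            (l₁.length + l₂.length) l₁ l₂ le_rfl v₁ hl₂0 (sum₁.trans hl₂s.symm)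
          refine ⟨c', hc'0, hc'sum.trans sum₁, ?_⟩
          intro z hz
          rcases Finset.mem_insert.mp hz with h | h
          · subst h
            exact lt_of_le_of_lt ((hc'le f hf0 hfφ z).2) hclt
          · exact lt_of_le_of_lt ((hc'le f hf0 hfφ z).1) (h₁ z h)
      obtain ⟨lsF, hlsF0, hlsFsum, hlsFlt⟩ := Kcomb hφfin.toFinset
      have hstarmem := QLmem G hP hφ0 hφb hlsF0 hf0 hfφ
      -- the approximation holds everywhere, with error δ·χ
      have hstar : ∀ y, QL G P φ lsF f y ≤ gs y + δ * χ y := by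
        intro y
        by_cases hy : φ y = 0
        · rw [hχz y hy, mul_zero, add_zero]
          exact ((hstarmem.2 y).trans hy.le).trans (hgs0 y)
        · rw [hχeq y hy, mul_one]
          exact (hlsFlt y (hφfin.mem_toFinset.mpr hy)).le
      have herr := QLerr G hP hφ0 hφb hχ0 hχ1 hχeq hχz hCχ1 hCχ hl0
        hstarmem.1 hstarmem.2 hgs0 hgsφ hδpos.le hstar x
      have hδCn : δ * Cχ ^ l.length = ε := by
        rw [hδdef, hCndef]
        field_simp
      have hconcat : Pcut G P φ (t + s) f x ≤ QL G P φ (l ++ lsF) f x :=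
        Pcut_le_QL G hP hφ0 hφb hf0 hfφ (by
          intro u hu
          rcases List.mem_append.mp hu with h | h
          · exact hl0 u h
          · exact hlsF0 u h) (by rw [List.sum_append, hlsum, hlsFsum]) x
      have happ : QL G P φ (l ++ lsF) f x = QL G P φ l (QL G P φ lsF f) x :=
        congrFun (QL_append G l lsF f) x
      have hfinal : QL G P φ l (QL G P φ lsF f) x ≤ QL G P φ l gs x + ε := by
        refine herr.trans ?_
        rw [hδCn]
        have : ε * χ x ≤ ε * 1 := mul_le_mul_of_nonneg_left (hχ1 x) hε.le
        nlinarith [hχ1 x, hχ0 x]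
      exact hconcat.trans (happ.le.trans hfinal)
    by_contra hcon
    push_neg at hcon
    have hε : (0:ℝ) < (Pcut G P φ (t + s) f x - QL G P φ l gs x) / 2 := by linarith
    have := hsuff _ hε
    linarith
end

section
/- If G is a locally finite weighted graph whose Ollivier curvature satisfies Ric(G) ≥ K for some K ∈ ℝ, then G is stochastically complete, i.e., P_t 1 = 1 for all t > 0. -/
open scoped BigOperators

namespace WeightedGraph

variable {V : Type} (G : WeightedGraph V)

lemma adj_of_w_ne {x y : V} (h : G.w x y ≠ 0) : G.toSimple.Adj x y := by
  refine ⟨?_, h⟩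
  rintro rfl
  exact h (G.loopless x)

lemma dist_le_one {x y : V} (h : G.w x y ≠ 0) : G.dist x y ≤ 1 := by
  have := SimpleGraph.dist_le ((G.adj_of_w_ne h).toWalk)
  simpa [WeightedGraph.dist] using this

lemma lap_eq (f : V → ℝ) (x : V) :
    G.lap f x = (∑ y ∈ (G.locFin x).toFinset, G.w x y * (f y - f x)) / G.m x := by
  unfold lap
  congr 1
  refine finsum_eq_finset_sum_of_support_subset _ ?_
  intro y hy
  simp only [Function.mem_support] at hy
  simp only [Set.Finite.coe_toFinset, Set.mem_setOf_eq]
  intro hw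
  exact hy (by rw [hw, zero_mul])

lemma deg_eq (x : V) :
    G.deg x = (∑ y ∈ (G.locFin x).toFinset, G.w x y) / G.m x := by
  unfold deg
  congr 1
  refine finsum_eq_finset_sum_of_support_subset _ ?_
  intro y hy
  simpa using hy

lemma deg_nonneg (x : V) : 0 ≤ G.deg x := by
  rw [deg_eq]
  exact div_nonneg (Finset.sum_nonneg fun y _ => G.nonneg x y) (G.mpos x).le

lemma lap_nonpos_of_max (f : V → ℝ) (x : V) (h : ∀ y, f y ≤ f x) : G.lap f x ≤ 0 := by
  rw [lap_eq]
  apply div_nonpos_of_nonpos_of_nonneg _ (G.mpos x).le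
  refine Finset.sum_nonpos fun y _ => ?_
  exact mul_nonpos_of_nonneg_of_nonpos (G.nonneg x y) (by linarith [h y])

lemma lap_add_aux (f g : V → ℝ) (c : ℝ) (x : V) :
    G.lap (fun z => f z + c * (1 + g z)) x = G.lap f x + c * G.lap g x := by
  rw [lap_eq, lap_eq, lap_eq, ← mul_div_assoc, ← add_div]
  congr 1
  rw [Finset.mul_sum, ← Finset.sum_add_distrib]
  exact Finset.sum_congr rfl fun y _ => by ring

lemma lap_const_sub (u : V → ℝ) (x : V) :
    G.lap (fun z => 1 - u z) x = - G.lap u x := by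
  rw [lap_eq, lap_eq, ← neg_div]
  congr 1
  rw [← Finset.sum_neg_distrib]
  exact Finset.sum_congr rfl fun y _ => by ring

lemma dist_getVert_le (hconn : G.toSimple.Connected) {x z : V}
    (p : G.toSimple.Walk x z) (k : ℕ) : G.toSimple.dist x (p.getVert k) ≤ k := by
  induction p generalizing k with
  | nil => simp [SimpleGraph.Walk.getVert, SimpleGraph.dist_self]
  | @cons a b c h q ih =>
      cases k with
      | zero => simp
      | succ k =>
          have h1 : (SimpleGraph.Walk.cons h q).getVert (k + 1) = q.getVert k := rfl
          rw [h1]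
          calc G.toSimple.dist a (q.getVert k)
              ≤ G.toSimple.dist a b + G.toSimple.dist b (q.getVert k) :=
                hconn.dist_triangle
            _ ≤ 1 + k := by
                have hab : G.toSimple.dist a b ≤ 1 := by
                  simpa using SimpleGraph.dist_le h.toWalk
                exact add_le_add hab (ih k)
            _ = k + 1 := by omega

lemma ball_finite (hconn : G.toSimple.Connected) (x : V) :
    ∀ n : ℕ, {z | G.toSimple.dist x z ≤ n}.Finite := by
  intro n
  induction n with
  | zero =>
      refine Set.Finite.subset (Set.finite_singleton x) ?_
      intro z hz
      simp only [Set.mem_setOf_eq, Nat.le_zero] at hz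
      have := (hconn.dist_eq_zero_iff).mp hz
      simp [this.symm]
  | succ n ih =>
      refine Set.Finite.subset
        (Set.Finite.union ih (Set.Finite.biUnion ih (fun y _ => G.locFin y))) ?_
      intro z hz
      simp only [Set.mem_setOf_eq] at hz
      by_cases hle : G.toSimple.dist x z ≤ n
      · exact Or.inl hle
      · have hne : G.toSimple.dist x z = n + 1 := by omega
        obtain ⟨p, hp⟩ := (hconn x z).exists_walk_length_eq_dist
        right
        refine Set.mem_biUnion (s := {z | G.toSimple.dist x z ≤ n})
          (show G.toSimple.dist x (p.getVert n) ≤ n from G.dist_getVert_le hconn p n) ?_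
        have hadj : G.toSimple.Adj (p.getVert n) (p.getVert (n + 1)) := by
          refine p.adj_getVert_succ ?_
          omega
        have hlen : n + 1 = p.length := by omega
        have hlast : p.getVert (n + 1) = z := by
          rw [hlen]; exact p.getVert_length
        rw [hlast] at hadj
        exact hadj.2


lemma div_le_div_aux {a b c : ℝ} (h : a ≤ b) (hc : 0 < c) : a / c ≤ b / c := by
  gcongr

lemma dist_triangle' (hconn : G.toSimple.Connected) (a b c : V) :
    G.dist a c ≤ G.dist a b + G.dist b c :=
  hconn.dist_triangle

lemma abs_dist_sub_le (hconn : G.toSimple.Connected) (x0 a b : V) :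
    |(G.dist x0 a : ℝ) - (G.dist x0 b : ℝ)| ≤ (G.dist a b : ℝ) := by
  rw [abs_sub_le_iff]
  constructor
  · have h := G.dist_triangle' hconn x0 b a
    have h2 : G.dist b a = G.dist a b := SimpleGraph.dist_comm
    rw [h2] at h
    have := (Nat.cast_le (α := ℝ)).mpr h
    push_cast at this
    linarith
  · have h := G.dist_triangle' hconn x0 a b
    have h2 : G.dist a b = G.dist a b := rfl
    have := (Nat.cast_le (α := ℝ)).mpr h
    push_cast at this
    linarith

lemma lap_gamma_le (hconn : G.toSimple.Connected) (K : ℝ)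
    (hRic : ∀ x y, x ≠ y → K ≤ G.curv x y) (x0 y : V) :
    G.lap (fun z => (G.dist x0 z : ℝ)) y ≤ G.deg x0 + |K| * (G.dist x0 y : ℝ) := by
  set γ : V → ℝ := fun z => (G.dist x0 z : ℝ) with hγdef
  have hγ0 : ∀ z, (0:ℝ) ≤ γ z := fun z => Nat.cast_nonneg _
  have hγx0 : γ x0 = 0 := by
    simp [hγdef, dist, SimpleGraph.dist_self]
  by_cases hy : y = x0
  · subst hy
    have h0 : ((G.dist y y : ℕ) : ℝ) = 0 := by simp [dist, SimpleGraph.dist_self]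
    rw [h0, mul_zero, add_zero]
    rw [lap_eq, deg_eq]
    have hsum : (∑ z ∈ (G.locFin y).toFinset, G.w y z * (γ z - γ y)) ≤
        ∑ z ∈ (G.locFin y).toFinset, G.w y z := by
      refine Finset.sum_le_sum fun z hz => ?_
      have hwz : G.w y z ≠ 0 := by simpa using hz
      have hd : γ z ≤ 1 := by
        simp only [hγdef]
        exact_mod_cast G.dist_le_one hwz
      have := G.nonneg y z
      nlinarith [hγx0]
    exact div_le_div_aux hsum (G.mpos y)
  · have hne : x0 ≠ y := fun h => hy h.symm
    have hR : 0 < G.dist x0 y := hconn.pos_dist_of_ne hne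
    set Rr : ℝ := (G.dist x0 y : ℝ) with hRrdef
    have hRr : 0 < Rr := by rw [hRrdef]; exact_mod_cast hR
    set f : V → ℝ := fun z => min (γ z) (max (2 * Rr + 2 - γ z) 0) with hfdef
    have hfeq : ∀ z, γ z ≤ Rr + 1 → f z = γ z := by
      intro z h
      refine min_eq_left (le_max_of_le_left ?_)
      linarith
    have hfx0 : f x0 = 0 := by
      rw [hfeq x0 (by rw [hγx0]; linarith), hγx0]
    have hfy : f y = Rr := hfeq y (by linarith)
    have hfle : ∀ z, f z ≤ γ z := fun z => min_le_left _ _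
    have hLip : G.Lip1 f := by
      intro a b
      have h1 : |γ a - γ b| ≤ (G.dist a b : ℝ) := G.abs_dist_sub_le hconn x0 a b
      have h2 : |max (2 * Rr + 2 - γ a) 0 - max (2 * Rr + 2 - γ b) 0| ≤ |γ a - γ b| := by
        have h3 := abs_max_sub_max_le_max (2 * Rr + 2 - γ a) 0 (2 * Rr + 2 - γ b) 0
        have e2 : max |(2 * Rr + 2 - γ a) - (2 * Rr + 2 - γ b)| |(0:ℝ) - 0| = |γ a - γ b| := by
          rw [show (2 * Rr + 2 - γ a) - (2 * Rr + 2 - γ b) = -(γ a - γ b) by ring,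
            abs_neg, sub_zero, abs_zero]
          exact max_eq_left (abs_nonneg _)
        rw [e2] at h3
        exact h3
      calc |f a - f b| ≤ max |γ a - γ b|
            |max (2 * Rr + 2 - γ a) 0 - max (2 * Rr + 2 - γ b) 0| :=
            abs_min_sub_min_le_max _ _ _ _
        _ ≤ |γ a - γ b| := max_le le_rfl h2
        _ ≤ (G.dist a b : ℝ) := h1
    have hsupp : (Function.support f).Finite := by
      refine Set.Finite.subset (G.ball_finite hconn x0 (2 * G.dist x0 y + 2)) ?_
      intro z hz
      simp only [Function.mem_support] at hz
      simp only [Set.mem_setOf_eq]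
      by_contra h
      push_neg at h
      have hγz : 2 * Rr + 2 ≤ γ z := by
        have : (2 * G.dist x0 y + 2 : ℕ) < G.dist x0 z := h
        have := (Nat.cast_lt (α := ℝ)).mpr this
        push_cast at this
        simp only [hγdef, hRrdef]
        show 2 * (G.dist x0 y : ℝ) + 2 ≤ (G.dist x0 z : ℝ)
        linarith
      have : f z = 0 := by
        rw [hfdef]
        simp only
        rw [max_eq_right (by linarith), min_eq_right (hγ0 z)]
      exact hz this
    have hbdd : BddBelow { c | ∃ g : V → ℝ, G.Lip1 g ∧ (Function.support g).Finite ∧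
        g y - g x0 = (G.dist x0 y : ℝ) ∧
        c = (G.lap g x0 - G.lap g y) / (G.dist x0 y : ℝ) } := by
      refine ⟨(-(G.deg x0) - G.deg y) / Rr, ?_⟩
      rintro c ⟨g, hg, -, -, rfl⟩
      have hlow : -G.deg x0 ≤ G.lap g x0 := by
        rw [lap_eq, deg_eq, ← neg_div]
        refine div_le_div_aux ?_ (G.mpos x0)
        rw [← Finset.sum_neg_distrib]
        refine Finset.sum_le_sum fun z hz => ?_
        have hwz : G.w x0 z ≠ 0 := by simpa using hz
        have hd : (G.dist x0 z : ℝ) ≤ 1 := by exact_mod_cast G.dist_le_one hwz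
        have habs := hg x0 z
        have hgz : -(1:ℝ) ≤ g z - g x0 := by
          have := abs_le.mp habs
          linarith [this.1]
        nlinarith [G.nonneg x0 z]
      have hup : G.lap g y ≤ G.deg y := by
        rw [lap_eq, deg_eq]
        refine div_le_div_aux ?_ (G.mpos y)
        refine Finset.sum_le_sum fun z hz => ?_
        have hwz : G.w y z ≠ 0 := by simpa using hz
        have hd : (G.dist y z : ℝ) ≤ 1 := by exact_mod_cast G.dist_le_one hwz
        have habs := hg z y
        have hgz : g z - g y ≤ 1 := by
          have := abs_le.mp habs
          have h2 : G.dist z y = G.dist y z := SimpleGraph.dist_comm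
          rw [h2] at this
          linarith [this.2]
        nlinarith [G.nonneg y z]
      rw [← hRrdef]
      apply div_le_div_aux _ hRr
      linarith
    have hmem : (G.lap f x0 - G.lap f y) / (G.dist x0 y : ℝ) ∈
        { c | ∃ g : V → ℝ, G.Lip1 g ∧ (Function.support g).Finite ∧
          g y - g x0 = (G.dist x0 y : ℝ) ∧
          c = (G.lap g x0 - G.lap g y) / (G.dist x0 y : ℝ) } :=
      ⟨f, hLip, hsupp, by rw [hfy, hfx0, sub_zero], rfl⟩
    have hK : K ≤ (G.lap f x0 - G.lap f y) / Rr :=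
      (hRic x0 y hne).trans (csInf_le hbdd hmem)
    have hlapfx0 : G.lap f x0 ≤ G.deg x0 := by
      rw [lap_eq, deg_eq]
      refine div_le_div_aux ?_ (G.mpos x0)
      refine Finset.sum_le_sum fun z hz => ?_
      have hwz : G.w x0 z ≠ 0 := by simpa using hz
      have hd : γ z ≤ 1 := by
        simp only [hγdef]
        exact_mod_cast G.dist_le_one hwz
      have := hfle z
      have := G.nonneg x0 z
      nlinarith [hfx0]
    have hlapeq : G.lap f y = G.lap γ y := by
      rw [lap_eq, lap_eq]
      congr 1
      refine Finset.sum_congr rfl fun z hz => ?_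
      have hwz : G.w y z ≠ 0 := by simpa using hz
      have hdz : G.dist x0 z ≤ G.dist x0 y + 1 := by
        have h1 := G.dist_triangle' hconn x0 y z
        have h2 := G.dist_le_one hwz
        omega
      have hγz : γ z ≤ Rr + 1 := by
        have := (Nat.cast_le (α := ℝ)).mpr hdz
        push_cast at this
        simpa [hγdef, hRrdef] using this
      rw [hfeq z hγz, hfy]
    have hmul : K * Rr ≤ G.lap f x0 - G.lap f y := by
      rwa [le_div_iff₀ hRr] at hK
    have habs : -K ≤ |K| := neg_le_abs K
    have : G.lap γ y ≤ G.deg x0 + |K| * Rr := by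
      rw [← hlapeq]
      nlinarith
    simpa [hRrdef] using this



open Topology Filter Set in
lemma deriv_sign_aux {φ : ℝ → ℝ} {d t0 : ℝ} (ht : 0 < t0)
    (hd : HasDerivWithinAt φ d (Set.Ici 0) t0)
    (hlt : ∀ t, 0 ≤ t → t < t0 → φ t < φ t0) : 0 ≤ d := by
  rw [hasDerivWithinAt_iff_tendsto_slope] at hd
  have hsub : Set.Ioo 0 t0 ⊆ Set.Ici (0:ℝ) \ {t0} := by
    intro s hs
    exact ⟨le_of_lt hs.1, ne_of_lt hs.2⟩
  have hne : (𝓝[Set.Ioo 0 t0] t0).NeBot := by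
    rw [← mem_closure_iff_nhdsWithin_neBot, closure_Ioo (ne_of_lt ht)]
    exact ⟨le_of_lt ht, le_rfl⟩
  have htend : Filter.Tendsto (slope φ t0) (𝓝[Set.Ioo 0 t0] t0) (𝓝 d) :=
    hd.mono_left (nhdsWithin_mono _ hsub)
  refine ge_of_tendsto htend ?_
  filter_upwards [self_mem_nhdsWithin] with s hs
  rw [slope_def_field]
  have h1 : φ s - φ t0 < 0 := by linarith [hlt s (le_of_lt hs.1) hs.2]
  have h2 : s - t0 < 0 := by linarith [hs.2]
  exact (div_pos_of_neg_of_neg h1 h2).le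

end WeightedGraph

set_option maxHeartbeats 1000000 in
/-- A lower Ollivier curvature bound implies stochastic completeness: `P_t 1 = 1`. -/
theorem stmt10 {V : Type} [Countable V] (G : WeightedGraph V)
    (hconn : G.toSimple.Connected)
    (P : ℝ → (V → ℝ) → V → ℝ) (hP : IsHeatSemigroup G P)
    (K : ℝ) (hRic : ∀ x y, x ≠ y → K ≤ G.curv x y) :
    ∀ t : ℝ, 0 < t → ∀ x, P t (fun _ => 1) x = 1 := by
  intro t ht x
  classical
  obtain ⟨hPmin, -⟩ := hP
  obtain ⟨hsol, hmin⟩ := hPmin (fun _ => 1) (fun _ => zero_le_one) ⟨1, fun _ => le_rfl⟩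
  obtain ⟨h0, hnn, -, hde⟩ := hsol
  have hone : IsHeatSolution G (fun _ => 1) (fun _ _ => 1) := by
    refine ⟨rfl, fun _ _ _ => zero_le_one, ⟨1, fun _ _ _ => le_rfl⟩, ?_⟩
    intro z s hs
    have hlap : G.lap (fun _ => (1:ℝ)) z = 0 := by
      rw [G.lap_eq]; simp
    rw [hlap]
    exact hasDerivWithinAt_const _ _ _
  have hle1 : ∀ s z, 0 ≤ s → P s (fun _ => 1) z ≤ 1 := fun s z hs => hmin _ hone s z hs
  set w : ℝ → V → ℝ := fun s z => 1 - P s (fun _ => 1) z with hwdef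
  have hw0 : ∀ z, w 0 z = 0 := by
    intro z
    have : P 0 (fun _ => (1:ℝ)) z = 1 := congrFun h0 z
    simp [hwdef, this]
  have hwnn : ∀ s z, 0 ≤ s → 0 ≤ w s z := by
    intro s z hs
    simp only [hwdef]
    linarith [hle1 s z hs]
  have hwle : ∀ s z, 0 ≤ s → w s z ≤ 1 := by
    intro s z hs
    simp only [hwdef]
    linarith [hnn s z hs]
  have hdw : ∀ z s, 0 ≤ s → HasDerivWithinAt (fun r => w r z) (G.lap (w s) z) (Set.Ici 0) s := by
    intro z s hs
    have h1 := (hde z s hs).const_sub 1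
    have h2 : G.lap (w s) z = -G.lap (fun y => P s (fun _ => 1) y) z := by
      rw [hwdef]
      exact G.lap_const_sub _ z
    rw [h2]
    exact h1
  set γ : V → ℝ := fun z => (G.dist x z : ℝ) with hγdef
  have hγ0 : ∀ z, 0 ≤ γ z := fun z => Nat.cast_nonneg _
  set a : ℝ := G.deg x with hadef
  have ha : 0 ≤ a := G.deg_nonneg x
  set b : ℝ := |K| with hbdef
  have hb : 0 ≤ b := abs_nonneg K
  set lam : ℝ := a + b + 1 with hlamdef
  have hlam : 0 < lam := by simp only [hlamdef]; linarith
  have key : ∀ δ : ℝ, 0 < δ → ∀ s, 0 ≤ s → ∀ z,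
      w s z ≤ δ * (1 + γ z) * Real.exp (lam * s) := by
    intro δ hδ
    by_contra hcon
    push_neg at hcon
    obtain ⟨t1, ht1, z1, hz1⟩ := hcon
    set g : ℝ → V → ℝ := fun s z => w s z - δ * (1 + γ z) * Real.exp (lam * s) with hgdef
    obtain ⟨N, hN⟩ := exists_nat_ge (1/δ)
    have hout : ∀ s z, 0 ≤ s → (N:ℝ) < γ z → g s z < 0 := by
      intro s z hs hz
      have he : 1 ≤ Real.exp (lam * s) := Real.one_le_exp (by positivity)
      have hwz := hwle s z hs
      have h1δ : 1 < δ * γ z := by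
        have h2 : 1/δ < γ z := lt_of_le_of_lt hN hz
        rw [div_lt_iff₀ hδ] at h2
        linarith
      have hγz := hγ0 z
      simp only [hgdef]
      nlinarith [Real.exp_pos (lam*s)]
    have hz1B : γ z1 ≤ (N:ℝ) := by
      by_contra h
      push_neg at h
      have h2 := hout t1 z1 ht1 h
      simp only [hgdef] at h2
      linarith
    set Bf : Finset V := (G.ball_finite hconn x N).toFinset with hBdef
    have hmemB : ∀ z, z ∈ Bf ↔ γ z ≤ (N:ℝ) := by
      intro z
      rw [hBdef, Set.Finite.mem_toFinset, Set.mem_setOf_eq]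
      simp only [hγdef]
      rw [show G.dist x z = G.toSimple.dist x z from rfl]
      exact ⟨fun h => by exact_mod_cast h, fun h => by exact_mod_cast h⟩
    have hcont : ∀ z, ContinuousOn (fun s => g s z) (Set.Icc 0 t1) := by
      intro z
      apply ContinuousOn.sub
      · have h3 : ContinuousOn (fun s => w s z) (Set.Ici 0) :=
          fun s hs => (hdw z s hs).continuousWithinAt
        exact h3.mono Set.Icc_subset_Ici_self
      · exact Continuous.continuousOn (by continuity)
    set S : Set ℝ := {s | s ∈ Set.Icc 0 t1 ∧ ∃ z ∈ Bf, 0 ≤ g s z} with hSdef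
    have hSclosed : IsClosed S := by
      have hS2 : S = ⋃ z ∈ (Bf : Set V), (Set.Icc 0 t1 ∩ (fun s => g s z) ⁻¹' Set.Ici 0) := by
        ext s
        simp only [hSdef, Set.mem_setOf_eq, Set.mem_iUnion, Set.mem_inter_iff,
          Set.mem_preimage, Set.mem_Ici, Finset.mem_coe, exists_prop]
        tauto
      rw [hS2]
      exact Set.Finite.isClosed_biUnion (Bf.finite_toSet) fun z _ =>
        (hcont z).preimage_isClosed_of_isClosed isClosed_Icc isClosed_Ici
    have ht1S : t1 ∈ S := ⟨⟨ht1, le_rfl⟩, z1, (hmemB z1).mpr hz1B, by simp only [hgdef]; linarith⟩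
    have hSbdd : BddBelow S := ⟨0, fun s hs => hs.1.1⟩
    set t' := sInf S with ht'def
    have ht'S : t' ∈ S := hSclosed.csInf_mem ⟨t1, ht1S⟩ hSbdd
    have ht'0 : 0 ≤ t' := ht'S.1.1
    have ht'pos : 0 < t' := by
      rcases ht'0.lt_or_eq with h | h
      · exact h
      · exfalso
        obtain ⟨-, z0, hz0B, hz0⟩ := ht'S
        rw [← h] at hz0
        have hlt : g 0 z0 < 0 := by
          simp only [hgdef]
          rw [hw0 z0]
          have hp : 0 < δ * (1 + γ z0) * Real.exp (lam * 0) := by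
            have := hγ0 z0
            positivity
          linarith
        linarith
    have hneg : ∀ s, 0 ≤ s → s < t' → ∀ z, z ∈ Bf → g s z < 0 := by
      intro s hs hst z hzB
      by_contra h
      push_neg at h
      have hsS : s ∈ S := ⟨⟨hs, le_trans hst.le ht'S.1.2⟩, z, hzB, h⟩
      exact absurd (csInf_le hSbdd hsS) (not_le.mpr hst)
    obtain ⟨-, zw, hzwB, hzw⟩ := ht'S
    obtain ⟨z', hz'B, hz'max⟩ := Bf.exists_max_image (fun z => g t' z) ⟨zw, hzwB⟩
    have hz'0 : 0 ≤ g t' z' := le_trans hzw (hz'max zw hzwB)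
    have hglobal : ∀ z, g t' z ≤ g t' z' := by
      intro z
      by_cases hzB : z ∈ Bf
      · exact hz'max z hzB
      · have h4 : (N:ℝ) < γ z := by
          rw [hmemB] at hzB
          push_neg at hzB
          exact hzB
        exact le_trans (hout t' z ht'0 h4).le hz'0
    have hdg : HasDerivWithinAt (fun s => g s z')
        (G.lap (w t') z' - δ * (1 + γ z') * (Real.exp (lam * t') * lam)) (Set.Ici 0) t' := by
      refine (hdw z' t' ht'0).sub ?_
      have h1 : HasDerivAt (fun s : ℝ => lam * s) lam t' := by
        simpa using (hasDerivAt_id t').const_mul lam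
      have h2 : HasDerivAt (fun s => Real.exp (lam * s)) (Real.exp (lam * t') * lam) t' := h1.exp
      exact (h2.const_mul (δ * (1 + γ z'))).hasDerivWithinAt
    have hD : 0 ≤ G.lap (w t') z' - δ * (1 + γ z') * (Real.exp (lam * t') * lam) := by
      apply WeightedGraph.deriv_sign_aux ht'pos hdg
      intro s hs hst
      exact lt_of_lt_of_le (hneg s hs hst z' hz'B) hz'0
    have hlapw : G.lap (w t') z' =
        G.lap (fun z => g t' z) z' + (δ * Real.exp (lam * t')) * G.lap γ z' := by
      have h5 : (fun z => g t' z + (δ * Real.exp (lam * t')) * (1 + γ z)) = w t' := by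
        funext z
        simp only [hgdef]
        ring
      rw [← h5, G.lap_add_aux]
    have hmax : G.lap (fun z => g t' z) z' ≤ 0 := G.lap_nonpos_of_max _ _ hglobal
    have hγle := G.lap_gamma_le hconn K hRic x z'
    rw [← hγdef, ← hadef, ← hbdef] at hγle
    have hexp : 0 < Real.exp (lam * t') := Real.exp_pos _
    have hγ' : 0 ≤ γ z' := hγ0 z'
    have hlam' : lam = a + b + 1 := hlamdef
    have hc : 0 ≤ δ * Real.exp (lam * t') := (mul_pos hδ hexp).le
    have h6 := mul_le_mul_of_nonneg_left hγle hc
    nlinarith [mul_nonneg hc hγ', mul_pos hδ hexp]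
  have hfin : w t x ≤ 0 := by
    by_contra hpos
    push_neg at hpos
    have hA : 0 < (1 + γ x) * Real.exp (lam * t) := by
      have := hγ0 x
      positivity
    have hk := key (w t x / (2 * ((1 + γ x) * Real.exp (lam * t)))) (by positivity) t ht.le x
    have heq : w t x / (2 * ((1 + γ x) * Real.exp (lam * t))) * (1 + γ x) * Real.exp (lam * t)
        = w t x / 2 := by
      have hγx1 : (1 + γ x) ≠ 0 := (by linarith [hγ0 x] : (0:ℝ) < 1 + γ x).ne'
      field_simp
    rw [heq] at hk
    have hk2 : w t x ≤ w t x / 2 := hk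
    clear_value w
    linarith [hk2, hpos]
  have hge := hwnn t x ht.le
  have : w t x = 0 := le_antisymm hfin hge
  simp only [hwdef] at this
  linarith
end

section
/- Laplacian comparison with decaying curvature: Let G be a locally finite weighted graph with fixed vertex x₀ and sphere curvatures κ(r) := min_{y∈S_r} max_{x∈S_{r-1}, x~y} κ(x,y), where S_r is the sphere of radius r about x₀. Then for f := d(x₀,·) one has Δf(y) ≤ Deg(x₀) − Σ_{r=1}^{d(x₀,y)} κ(r) for all y ∈ V. Moreover, equality holds for all y when G is a birth-death chain with x₀ = 0. -/
open scoped BigOperators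

/-- The sphere curvature `κ(r) = min_{y ∈ S_r} max_{x ∈ S_{r-1}, x ∼ y} κ(x,y)` about `x₀`. -/
noncomputable def sphCurv {V : Type} (G : WeightedGraph V) (x₀ : V) (r : ℕ) : ℝ :=
  sInf { c | ∃ y, G.dist x₀ y = r ∧
    c = sSup { c' | ∃ x, G.dist x₀ x = r - 1 ∧ G.toSimple.Adj x y ∧ c' = G.curv x y } }

/-- The measure of the sphere of radius `r` about `x₀`. -/
noncomputable def sphM {V : Type} (G : WeightedGraph V) (x₀ : V) (r : ℕ) : ℝ :=
  ∑ᶠ x ∈ {z | G.dist x₀ z = r}, G.m x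

/-- The total edge weight between the spheres of radii `r` and `r+1` about `x₀`. -/
noncomputable def sphW {V : Type} (G : WeightedGraph V) (x₀ : V) (r : ℕ) : ℝ :=
  ∑ᶠ x ∈ {z | G.dist x₀ z = r}, ∑ᶠ y ∈ {z | G.dist x₀ z = r + 1}, G.w x y

/-- The Laplacian of a birth-death chain with forward weights `a` (i.e. `w(r,r+1) = a r`)
and measure `mm`. -/
noncomputable def bdLap (a mm : ℕ → ℝ) (g : ℕ → ℝ) (r : ℕ) : ℝ :=
  (a r * (g (r + 1) - g r) + (if r = 0 then 0 else a (r - 1) * (g (r - 1) - g r))) / mm r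

namespace WGAux

open WeightedGraph

variable {V : Type} (G : WeightedGraph V)

lemma adj_of_w {x y : V} (h : G.w x y ≠ 0) : G.toSimple.Adj x y := by
  refine ⟨fun he => h ?_, h⟩
  subst he; exact G.loopless x

lemma dist_adj {x y : V} (h : G.toSimple.Adj x y) : G.dist x y = 1 :=
  SimpleGraph.dist_eq_one_iff_adj.mpr h

lemma lap_eq_sum (f : V → ℝ) (x : V) :
    G.lap f x = (∑ y ∈ (G.locFin x).toFinset, G.w x y * (f y - f x)) / G.m x := by
  unfold WeightedGraph.lap
  congr 1
  apply finsum_eq_sum_of_support_subset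
  intro y hy
  simp only [Function.mem_support] at hy
  simp only [Set.Finite.coe_toFinset, Set.mem_setOf_eq]
  intro hw; exact hy (by rw [hw, zero_mul])

lemma deg_eq_sum (x : V) :
    G.deg x = (∑ y ∈ (G.locFin x).toFinset, G.w x y) / G.m x := by
  unfold WeightedGraph.deg
  congr 1
  apply finsum_eq_sum_of_support_subset
  intro y hy
  simpa using hy

/-- distance triangle for adjacency, cast-free form -/
lemma dist_le_succ (hconn : G.toSimple.Connected) (x₀ : V) {x z : V}
    (h : G.toSimple.Adj x z) : G.dist x₀ z ≤ G.dist x₀ x + 1 := by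
  have h1 : G.toSimple.dist x z = 1 := SimpleGraph.dist_eq_one_iff_adj.mpr h
  have := hconn.dist_triangle (u := x₀) (v := x) (w := z)
  rw [h1] at this
  exact this

/-- predecessor on a geodesic -/
lemma exists_pred (hconn : G.toSimple.Connected) {x₀ y : V} {R : ℕ}
    (h : G.dist x₀ y = R + 1) :
    ∃ x, G.toSimple.Adj x y ∧ G.dist x₀ x = R := by
  obtain ⟨p, hp⟩ := hconn.exists_walk_length_eq_dist x₀ y
  rw [show G.toSimple.dist x₀ y = G.dist x₀ y from rfl, h] at hp
  have hq : (p.reverse).length = R + 1 := by rw [SimpleGraph.Walk.length_reverse, hp]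
  rcases hrev : p.reverse with _ | ⟨hadj, q⟩
  · rw [hrev] at hq; simp at hq
  · rename_i x
    rw [hrev] at hq
    simp only [SimpleGraph.Walk.length_cons, Nat.add_right_cancel_iff] at hq
    refine ⟨x, hadj.symm, le_antisymm ?_ ?_⟩
    · have := SimpleGraph.dist_le q.reverse
      rwa [SimpleGraph.Walk.length_reverse, hq] at this
    · have h2 := dist_le_succ G hconn x₀ hadj.symm
      rw [h] at h2
      omega

lemma ball_finite (hconn : G.toSimple.Connected) (x₀ : V) (R : ℕ) :
    {z | G.dist x₀ z ≤ R}.Finite := by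
  induction R with
  | zero =>
      apply Set.Finite.subset (Set.finite_singleton x₀)
      intro z hz
      simp only [Set.mem_setOf_eq, Nat.le_zero] at hz
      have : z = x₀ := by
        have := (hconn.dist_eq_zero_iff (u := x₀) (v := z)).mp hz
        exact this.symm
      simp [this]
  | succ n ih =>
      apply Set.Finite.subset (ih.union (ih.biUnion (fun x _ => G.locFin x)))
      intro z hz
      simp only [Set.mem_setOf_eq] at hz
      rcases Nat.lt_or_ge (G.dist x₀ z) (n+1) with hlt | hge
      · exact Or.inl (by simpa using Nat.lt_succ_iff.mp hlt)
      · have heq : G.dist x₀ z = n + 1 := le_antisymm hz hge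
        obtain ⟨x, hadj, hx⟩ := exists_pred G hconn heq
        refine Or.inr ?_
        refine Set.mem_biUnion (show x ∈ {z | G.dist x₀ z ≤ n} from by simp [hx]) ?_
        have : G.w x z ≠ 0 := hadj.2
        simpa using G.symm x z ▸ hadj.2

end WGAux
namespace WGAux

variable {V : Type} (G : WeightedGraph V)

/-- the distance function from `x₀`, real-valued -/
noncomputable def fD (x₀ : V) : V → ℝ := fun z => (G.dist x₀ z : ℝ)

/-- the truncated distance function -/
noncomputable def trunc (x₀ : V) (R : ℕ) : V → ℝ :=
  fun z => min ((G.dist x₀ z : ℝ)) (R + 1) - (R + 1)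

lemma abs_min_sub_min (a b c : ℝ) : |min a c - min b c| ≤ |a - b| := by
  rcases le_total a b with h | h <;> rcases le_total a c with h1 | h1 <;>
    rcases le_total b c with h2 | h2 <;>
    simp [min_eq_left, min_eq_right, abs_le, *] <;> constructor <;> linarith [abs_nonneg (a-b),
      le_abs_self (a-b), neg_abs_le (a-b)]

lemma dist_lip (hconn : G.toSimple.Connected) (x₀ u v : V) :
    |(G.dist x₀ u : ℝ) - (G.dist x₀ v : ℝ)| ≤ (G.dist u v : ℝ) := by
  have h1 : G.toSimple.dist x₀ u ≤ G.toSimple.dist x₀ v + G.toSimple.dist v u :=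
    hconn.dist_triangle
  have h2 : G.toSimple.dist x₀ v ≤ G.toSimple.dist x₀ u + G.toSimple.dist u v :=
    hconn.dist_triangle
  have h3 : G.toSimple.dist v u = G.toSimple.dist u v := SimpleGraph.dist_comm
  have e1 : G.dist x₀ u = G.toSimple.dist x₀ u := rfl
  have e2 : G.dist x₀ v = G.toSimple.dist x₀ v := rfl
  have e3 : G.dist u v = G.toSimple.dist u v := rfl
  rw [abs_le, e1, e2, e3]
  constructor
  · have := (Nat.cast_le (α := ℝ)).mpr h2
    push_cast at this ⊢; linarith
  · have := (Nat.cast_le (α := ℝ)).mpr (h3 ▸ h1)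
    push_cast at this ⊢; linarith

lemma trunc_lip (hconn : G.toSimple.Connected) (x₀ : V) (R : ℕ) :
    G.Lip1 (trunc G x₀ R) := by
  intro u v
  unfold trunc
  have h1 : trunc G x₀ R u - trunc G x₀ R v =
      min ((G.dist x₀ u : ℝ)) (R + 1) - min ((G.dist x₀ v : ℝ)) (R + 1) := by
    unfold trunc; ring
  calc |min ((G.dist x₀ u : ℝ)) (R + 1) - (R+1) - (min ((G.dist x₀ v : ℝ)) (R + 1) - (R+1))|
      = |min ((G.dist x₀ u : ℝ)) (R + 1) - min ((G.dist x₀ v : ℝ)) (R + 1)| := by ring_nf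
    _ ≤ |(G.dist x₀ u : ℝ) - (G.dist x₀ v : ℝ)| := abs_min_sub_min _ _ _
    _ ≤ (G.dist u v : ℝ) := dist_lip G hconn x₀ u v

lemma trunc_support (hconn : G.toSimple.Connected) (x₀ : V) (R : ℕ) :
    (Function.support (trunc G x₀ R)).Finite := by
  apply (ball_finite G hconn x₀ R).subset
  intro z hz
  simp only [Function.mem_support] at hz
  simp only [Set.mem_setOf_eq]
  by_contra hle
  push_neg at hle
  have : min ((G.dist x₀ z : ℝ)) (R + 1) = (R + 1 : ℝ) := by
    apply min_eq_right
    exact_mod_cast hle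
  exact hz (by unfold trunc; rw [this]; ring)

/-- on vertices well inside the truncation radius, the Laplacians of the
truncated and untruncated distance agree -/
lemma lap_trunc_eq (hconn : G.toSimple.Connected) (x₀ : V) (R : ℕ) {v : V}
    (hv : G.dist x₀ v ≤ R) :
    G.lap (trunc G x₀ R) v = G.lap (fD G x₀) v := by
  rw [lap_eq_sum, lap_eq_sum]
  congr 1
  apply Finset.sum_congr rfl
  intro z hz
  simp only [Set.Finite.mem_toFinset, Set.mem_setOf_eq] at hz
  have hadj := adj_of_w G hz
  have hdz : G.dist x₀ z ≤ R + 1 := le_trans (dist_le_succ G hconn x₀ hadj) (by omega)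
  have m1 : min ((G.dist x₀ z : ℝ)) (R + 1) = (G.dist x₀ z : ℝ) :=
    min_eq_left (by exact_mod_cast hdz)
  have m2 : min ((G.dist x₀ v : ℝ)) (R + 1) = (G.dist x₀ v : ℝ) :=
    min_eq_left (by exact_mod_cast le_trans hv (by omega : R ≤ R + 1))
  unfold trunc fD
  rw [m1, m2]
  ring_nf

/-- a Lip1 function has Laplacian bounded by the degree -/
lemma abs_lap_le_deg (h : V → ℝ) (hLip : G.Lip1 h) (x : V) :
    |G.lap h x| ≤ G.deg x := by
  rw [lap_eq_sum, deg_eq_sum, abs_div, abs_of_pos (G.mpos x)]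
  have hm := G.mpos x
  gcongr
  calc |∑ y ∈ (G.locFin x).toFinset, G.w x y * (h y - h x)|
      ≤ ∑ y ∈ (G.locFin x).toFinset, |G.w x y * (h y - h x)| := Finset.abs_sum_le_sum_abs _ _
    _ ≤ ∑ y ∈ (G.locFin x).toFinset, G.w x y := by
        apply Finset.sum_le_sum
        intro y hy
        simp only [Set.Finite.mem_toFinset, Set.mem_setOf_eq] at hy
        rw [abs_mul, abs_of_nonneg (G.nonneg x y)]
        have hd : G.dist y x = 1 := dist_adj G (adj_of_w G hy).symm
        have := hLip y x
        rw [hd] at this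
        push_cast at this
        nlinarith [G.nonneg x y, abs_nonneg (h y - h x)]

lemma curv_bddBelow (hconn : G.toSimple.Connected) (x y : V) (hne : x ≠ y) :
    BddBelow { c | ∃ f : V → ℝ, G.Lip1 f ∧ (Function.support f).Finite ∧
      f y - f x = (G.dist x y : ℝ) ∧ c = (G.lap f x - G.lap f y) / (G.dist x y : ℝ) } := by
  refine ⟨-(G.deg x + G.deg y), ?_⟩
  rintro c ⟨f, hLip, _, _, rfl⟩
  have hd : 1 ≤ G.dist x y := hconn.pos_dist_of_ne hne
  have hd' : (1 : ℝ) ≤ (G.dist x y : ℝ) := by exact_mod_cast hd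
  have h1 := abs_lap_le_deg G f hLip x
  have h2 := abs_lap_le_deg G f hLip y
  have hnum : -(G.deg x + G.deg y) ≤ G.lap f x - G.lap f y := by
    have := neg_abs_le (G.lap f x)
    have := neg_abs_le (G.lap f y)
    have := le_abs_self (G.lap f y)
    linarith
  have hnn : G.deg x + G.deg y ≥ 0 := by
    have := abs_nonneg (G.lap f x); have := abs_nonneg (G.lap f y); linarith
  have hpos : (0:ℝ) < (G.dist x y : ℝ) := by linarith
  calc -(G.deg x + G.deg y) ≤ -(G.deg x + G.deg y) / (G.dist x y : ℝ) := by
        rw [le_div_iff₀ hpos]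
        nlinarith
    _ ≤ (G.lap f x - G.lap f y) / (G.dist x y : ℝ) := by gcongr

end WGAux
namespace WGAux

variable {V : Type} (G : WeightedGraph V)

lemma curv_mem (hconn : G.toSimple.Connected) (x₀ : V) {x y : V}
    (hadj : G.toSimple.Adj x y) (hd : G.dist x₀ y = G.dist x₀ x + 1) :
    (G.lap (fD G x₀) x - G.lap (fD G x₀) y) ∈
      { c | ∃ f : V → ℝ, G.Lip1 f ∧ (Function.support f).Finite ∧
        f y - f x = (G.dist x y : ℝ) ∧ c = (G.lap f x - G.lap f y) / (G.dist x y : ℝ) } := by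
  have hxy : G.dist x y = 1 := dist_adj G hadj
  refine ⟨trunc G x₀ (G.dist x₀ y), trunc_lip G hconn _ _, trunc_support G hconn _ _, ?_, ?_⟩
  · unfold trunc
    rw [hxy, hd]
    have m1 : min ((G.dist x₀ y : ℝ)) ((G.dist x₀ y : ℝ) + 1) = (G.dist x₀ y : ℝ) :=
      min_eq_left (by linarith)
    have m2 : min ((G.dist x₀ x : ℝ)) ((G.dist x₀ y : ℝ) + 1) = (G.dist x₀ x : ℝ) := by
      apply min_eq_left
      have : (G.dist x₀ x : ℝ) ≤ (G.dist x₀ y : ℝ) := by exact_mod_cast (by omega : G.dist x₀ x ≤ G.dist x₀ y)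
      linarith
    rw [hd] at m1 m2
    push_cast at m1 m2 ⊢
    rw [m1, m2]
    ring
  · rw [hxy]
    rw [lap_trunc_eq G hconn x₀ _ (le_refl _),
      lap_trunc_eq G hconn x₀ _ (by omega : G.dist x₀ x ≤ G.dist x₀ y)]
    norm_num

lemma curv_le (hconn : G.toSimple.Connected) (x₀ : V) {x y : V}
    (hadj : G.toSimple.Adj x y) (hd : G.dist x₀ y = G.dist x₀ x + 1) :
    G.curv x y ≤ G.lap (fD G x₀) x - G.lap (fD G x₀) y :=
  csInf_le (curv_bddBelow G hconn x y hadj.ne) (curv_mem G hconn x₀ hadj hd)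

lemma lap_fD_center (x₀ : V) : G.lap (fD G x₀) x₀ = G.deg x₀ := by
  rw [lap_eq_sum, deg_eq_sum]
  congr 1
  apply Finset.sum_congr rfl
  intro z hz
  simp only [Set.Finite.mem_toFinset, Set.mem_setOf_eq] at hz
  have h1 : G.dist x₀ z = 1 := dist_adj G (adj_of_w G hz)
  have h0 : G.dist x₀ x₀ = 0 := SimpleGraph.dist_self
  unfold fD
  rw [h1, h0]
  push_cast
  ring

lemma part1 (hconn : G.toSimple.Connected) (x₀ : V) :
    ∀ n : ℕ, ∀ y, G.dist x₀ y = n →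
      G.lap (fD G x₀) y ≤ G.deg x₀ - ∑ r ∈ Finset.Icc 1 n, sphCurv G x₀ r := by
  intro n
  induction n with
  | zero =>
      intro y hy
      have hyx : x₀ = y := (hconn.dist_eq_zero_iff).mp hy
      subst hyx
      simp [lap_fD_center G x₀]
  | succ n ih =>
      intro y hy
      set A := {c' | ∃ x, G.dist x₀ x = (n + 1) - 1 ∧ G.toSimple.Adj x y ∧ c' = G.curv x y}
        with hA
      have hAfin : A.Finite := by
        apply ((ball_finite G hconn x₀ n).image (fun x => G.curv x y)).subset
        rintro c ⟨x, hx, _, rfl⟩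
        exact ⟨x, by simp; omega, rfl⟩
      have hAne : A.Nonempty := by
        obtain ⟨x, hadj, hx⟩ := exists_pred G hconn hy
        exact ⟨G.curv x y, x, by omega, hadj, rfl⟩
      obtain ⟨x, hx, hadj, hcx⟩ := hAne.csSup_mem hAfin
      have h1 : sphCurv G x₀ (n + 1) ≤ sSup A := by
        apply csInf_le
        · apply Set.Finite.bddBelow
          apply ((ball_finite G hconn x₀ (n+1)).image
            (fun y' => sSup {c' | ∃ x, G.dist x₀ x = (n + 1) - 1 ∧ G.toSimple.Adj x y' ∧
              c' = G.curv x y'})).subset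
          rintro c ⟨y', hy', rfl⟩
          exact ⟨y', by simp [hy'], rfl⟩
        · exact ⟨y, hy, rfl⟩
      have h2 : G.curv x y ≤ G.lap (fD G x₀) x - G.lap (fD G x₀) y :=
        curv_le G hconn x₀ hadj (by omega)
      have h3 := ih x (by omega)
      rw [Finset.sum_Icc_succ_top (by omega : 1 ≤ n + 1)]
      rw [hcx] at h1
      linarith

end WGAux
namespace WGAux

section BD

variable (H : WeightedGraph ℕ)
  (hbd : ∀ r s : ℕ, s ≠ r + 1 → r ≠ s + 1 → H.w r s = 0)
  (hpos : ∀ r : ℕ, 0 < H.w r (r + 1))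

include hpos in
lemma adj_succ (r : ℕ) : H.toSimple.Adj r (r + 1) :=
  ⟨by omega, (hpos r).ne'⟩

include hpos in
lemma bd_conn : H.toSimple.Connected := by
  have hreach : ∀ n : ℕ, H.toSimple.Reachable 0 n := by
    intro n
    induction n with
    | zero => exact SimpleGraph.Reachable.refl 0
    | succ n ih => exact ih.trans (adj_succ H hpos n).reachable
  exact ⟨fun u v => (hreach u).symm.trans (hreach v)⟩

include hbd in
lemma bd_adj_cases {u v : ℕ} (h : H.toSimple.Adj u v) : v = u + 1 ∨ u = v + 1 := by
  by_contra hc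
  push_neg at hc
  exact h.2 (hbd u v hc.1 hc.2)

include hbd in
lemma bd_walk_ge : ∀ {u v : ℕ} (p : H.toSimple.Walk u v),
    v ≤ u + p.length ∧ u ≤ v + p.length := by
  intro u v p
  induction p with
  | nil => simp
  | cons h p ih =>
      have := bd_adj_cases H hbd h
      simp only [SimpleGraph.Walk.length_cons]
      omega

include hbd hpos in
lemma bd_dist0 (y : ℕ) : H.dist 0 y = y := by
  have hconn := bd_conn H hpos
  apply le_antisymm
  · induction y with
    | zero => exact le_of_eq SimpleGraph.dist_self
    | succ n ih =>
        have := dist_le_succ H hconn 0 (adj_succ H hpos n)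
        omega
  · obtain ⟨p, hp⟩ := hconn.exists_walk_length_eq_dist 0 y
    have := (bd_walk_ge H hbd p).1
    rw [hp] at this
    simpa [WeightedGraph.dist] using this

include hbd in
lemma bd_finsum (F : ℕ → ℝ) (r : ℕ) :
    ∑ᶠ z, H.w r z * F z =
      H.w r (r + 1) * F (r + 1) + (if r = 0 then 0 else H.w r (r - 1) * F (r - 1)) := by
  have hsupp : Function.support (fun z => H.w r z * F z) ⊆ (({r + 1, r - 1} : Finset ℕ) : Set ℕ) := by
    intro z hz
    simp only [Function.mem_support] at hz
    have hw : H.w r z ≠ 0 := fun h => hz (by rw [h, zero_mul])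
    have : z = r + 1 ∨ r = z + 1 := by
      by_contra hc
      push_neg at hc
      exact hw (hbd r z hc.1 hc.2)
    simp only [Finset.coe_insert, Finset.coe_singleton, Set.mem_insert_iff,
      Set.mem_singleton_iff]
    omega
  rw [finsum_eq_sum_of_support_subset _ hsupp]
  rcases Nat.eq_zero_or_pos r with hr | hr
  · subst hr
    simp [Finset.sum_pair (by omega : (0:ℕ) + 1 ≠ 0 - 1), H.loopless]
  · rw [Finset.sum_pair (by omega : r + 1 ≠ r - 1)]
    rw [if_neg (by omega)]

include hbd in
lemma bd_lap (F : ℕ → ℝ) (r : ℕ) :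
    H.lap F r = (H.w r (r + 1) * (F (r + 1) - F r) +
      (if r = 0 then 0 else H.w r (r - 1) * (F (r - 1) - F r))) / H.m r := by
  unfold WeightedGraph.lap
  rw [bd_finsum H hbd (fun z => F z - F r) r]

include hbd hpos in
lemma bd_fD (z : ℕ) : fD H 0 z = (z : ℝ) := by
  unfold fD
  rw [bd_dist0 H hbd hpos]

include hpos in
lemma bd_lip_bound {h : ℕ → ℝ} (hLip : H.Lip1 h) (r : ℕ) :
    |h r - h (r + 1)| ≤ 1 := by
  have := hLip r (r + 1)
  rw [dist_adj H (adj_succ H hpos r)] at this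
  exact_mod_cast this

include hbd hpos in
lemma bd_curv_eq (r : ℕ) :
    H.curv r (r + 1) = H.lap (fD H 0) r - H.lap (fD H 0) (r + 1) := by
  have hconn := bd_conn H hpos
  have hd : H.dist 0 (r + 1) = H.dist 0 r + 1 := by
    rw [bd_dist0 H hbd hpos, bd_dist0 H hbd hpos]
  have hadj := adj_succ H hpos r
  apply le_antisymm (curv_le H hconn 0 hadj hd)
  apply le_csInf ⟨_, curv_mem H hconn 0 hadj hd⟩
  rintro c ⟨h, hLip, _, hdiff, rfl⟩
  have hd1 : H.dist r (r + 1) = 1 := dist_adj H hadj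
  rw [hd1] at hdiff ⊢
  norm_num at hdiff ⊢
  have hm1 := H.mpos r
  have hm2 := H.mpos (r + 1)
  have e1 : fD H 0 (r + 1) - fD H 0 r = 1 := by
    rw [bd_fD H hbd hpos, bd_fD H hbd hpos]; push_cast; ring
  have key1 : H.lap (fD H 0) r ≤ H.lap h r := by
    rw [bd_lap H hbd, bd_lap H hbd]
    gcongr ?_ / _
    rw [e1, hdiff]
    apply add_le_add_right
    split_ifs with h0
    · exact le_refl _
    · apply mul_le_mul_of_nonneg_left ?_ (H.nonneg r (r - 1))
      have e2 : fD H 0 (r - 1) - fD H 0 r = -1 := by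
        rw [bd_fD H hbd hpos, bd_fD H hbd hpos]
        rw [Nat.cast_sub (by omega : 1 ≤ r)]
        push_cast; ring
      rw [e2]
      have hb := bd_lip_bound H hpos hLip (r - 1)
      rw [show r - 1 + 1 = r by omega] at hb
      have := neg_abs_le (h (r - 1) - h r)
      linarith
  have key2 : H.lap h (r + 1) ≤ H.lap (fD H 0) (r + 1) := by
    rw [bd_lap H hbd, bd_lap H hbd]
    gcongr ?_ / _
    rw [if_neg (Nat.succ_ne_zero r), if_neg (Nat.succ_ne_zero r),
      show r + 1 - 1 = r from rfl]
    have e3 : fD H 0 (r + 2) - fD H 0 (r + 1) = 1 := by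
      rw [bd_fD H hbd hpos, bd_fD H hbd hpos]; push_cast; ring
    have e4 : fD H 0 r - fD H 0 (r + 1) = -1 := by
      rw [bd_fD H hbd hpos, bd_fD H hbd hpos]; push_cast; ring
    rw [e3, e4]
    have hdr : h r - h (r + 1) = -1 := by linarith
    rw [hdr]
    apply add_le_add_left
    apply mul_le_mul_of_nonneg_left ?_ (H.nonneg (r + 1) (r + 2))
    have hb : |h (r + 1) - h (r + 2)| ≤ 1 := bd_lip_bound H hpos hLip (r + 1)
    have := neg_abs_le (h (r + 1) - h (r + 2))
    linarith
  linarith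

include hbd hpos in
lemma bd_sphCurv (k : ℕ) : sphCurv H 0 (k + 1) = H.curv k (k + 1) := by
  unfold sphCurv
  have hinner : ∀ y : ℕ, y = k + 1 →
      {c' | ∃ x, H.dist 0 x = (k + 1) - 1 ∧ H.toSimple.Adj x y ∧ c' = H.curv x y} =
        {H.curv k (k + 1)} := by
    rintro y rfl
    ext c'
    simp only [Set.mem_setOf_eq, Set.mem_singleton_iff]
    constructor
    · rintro ⟨x, hx, _, rfl⟩
      rw [bd_dist0 H hbd hpos] at hx
      have : x = k := by omega
      rw [this]
    · rintro rfl
      exact ⟨k, by rw [bd_dist0 H hbd hpos]; omega, adj_succ H hpos k, rfl⟩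
  have houter : {c | ∃ y, H.dist 0 y = k + 1 ∧
      c = sSup {c' | ∃ x, H.dist 0 x = (k + 1) - 1 ∧ H.toSimple.Adj x y ∧ c' = H.curv x y}} =
        {H.curv k (k + 1)} := by
    ext c
    simp only [Set.mem_setOf_eq, Set.mem_singleton_iff]
    constructor
    · rintro ⟨y, hy, rfl⟩
      rw [bd_dist0 H hbd hpos] at hy
      rw [hinner y hy, csSup_singleton]
    · rintro rfl
      exact ⟨k + 1, by rw [bd_dist0 H hbd hpos], by rw [hinner (k+1) rfl, csSup_singleton]⟩
  rw [houter, csInf_singleton]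

include hbd hpos in
lemma bd_main (y : ℕ) :
    H.lap (fD H 0) y = H.deg 0 - ∑ r ∈ Finset.Icc 1 (H.dist 0 y), sphCurv H 0 r := by
  rw [bd_dist0 H hbd hpos]
  have hsum : ∑ r ∈ Finset.Icc 1 y, sphCurv H 0 r
      = ∑ i ∈ Finset.range y, (H.lap (fD H 0) i - H.lap (fD H 0) (i + 1)) := by
    rw [show Finset.Icc 1 y = Finset.Ico 1 (y + 1) by rfl, Finset.sum_Ico_eq_sum_range]
    simp only [Nat.add_sub_cancel]
    apply Finset.sum_congr rfl
    intro i _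
    rw [show 1 + i = i + 1 by omega, bd_sphCurv H hbd hpos i, bd_curv_eq H hbd hpos i]
  rw [hsum, Finset.sum_range_sub' (fun i => H.lap (fD H 0) i) y,
    lap_fD_center H 0]
  ring

end BD

end WGAux
/-- Laplacian comparison with decaying curvature: `Δ d(x₀,·)(y) ≤ Deg(x₀) - ∑_{r=1}^{d(x₀,y)} κ(r)`
where `κ(r)` are the sphere curvatures; equality holds on birth-death chains rooted at `0`. -/
theorem stmt13 {V : Type} [Countable V] (G : WeightedGraph V)
    (hconn : G.toSimple.Connected) (x₀ : V) :
    (∀ y, G.lap (fun z => (G.dist x₀ z : ℝ)) y ≤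
      G.deg x₀ - ∑ r ∈ Finset.Icc 1 (G.dist x₀ y), sphCurv G x₀ r) ∧
    (∀ H : WeightedGraph ℕ, (∀ r s : ℕ, s ≠ r + 1 → r ≠ s + 1 → H.w r s = 0) →
      (∀ r : ℕ, 0 < H.w r (r + 1)) →
      ∀ y : ℕ, H.lap (fun z => (H.dist 0 z : ℝ)) y =
        H.deg 0 - ∑ r ∈ Finset.Icc 1 (H.dist 0 y), sphCurv H 0 r) := by
  constructor
  · intro y
    exact WGAux.part1 G hconn x₀ (G.dist x₀ y) y rfl
  · intro H hbd hpos y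
    exact WGAux.bd_main H hbd hpos y
end

section
/- For ε>0 let G_ε=(ℕ₀,w,m) be the birth-death chain with m ≡ 1 and w(R,R+1) = 1 + Σ_{r=1}^R Σ_{k=1}^r (log k)^{1+ε}. Then G_ε is stochastically incomplete and its Ollivier curvature satisfies κ(r-1,r) = −(log r)^{1+ε} ≥ −(log r)^{1+ε} for all r ≥ 2. -/
open scoped BigOperators

open Real


lemma bertrand_sum {L : ℝ} (hL : 1 < L) :
    Summable (fun r : ℕ => ((r : ℝ) * (max 1 (Real.log r)) ^ L)⁻¹) := by
  have hL0 : 0 ≤ L := by linarith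
  set f : ℕ → ℝ := fun r => ((r : ℝ) * (max 1 (Real.log r)) ^ L)⁻¹ with hf
  have hM1 : ∀ n : ℕ, (1:ℝ) ≤ max 1 (Real.log n) := fun n => le_max_left _ _
  have hMpos : ∀ n : ℕ, (0:ℝ) < max 1 (Real.log n) := fun n => lt_of_lt_of_le one_pos (hM1 n)
  have h0 : ∀ n : ℕ, 0 ≤ f n := by
    intro n
    have := Real.rpow_nonneg (hMpos n).le L
    positivity
  have hmono : ∀ ⦃m n : ℕ⦄, 0 < m → m ≤ n → f n ≤ f m := by
    intro m n hm hmn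
    apply inv_anti₀
    · have := Real.rpow_pos_of_pos (hMpos m) L
      have hmr : (0:ℝ) < (m:ℝ) := by exact_mod_cast hm
      positivity
    · apply mul_le_mul (by exact_mod_cast hmn)
      · apply Real.rpow_le_rpow (hMpos m).le _ hL0
        exact max_le_max le_rfl (Real.log_le_log (by exact_mod_cast hm) (by exact_mod_cast hmn))
      · exact (Real.rpow_pos_of_pos (hMpos m) L).le
      · exact Nat.cast_nonneg n
  rw [← summable_condensed_iff_of_nonneg h0 hmono]
  have hmaj : Summable (fun k : ℕ => (4:ℝ) ^ L * ((((k:ℝ) + 1)) ^ L)⁻¹) := by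
    apply Summable.mul_left
    have := (summable_nat_rpow_inv (p := L)).2 hL
    have h := (summable_nat_add_iff 1).2 this
    refine h.congr fun n => ?_
    push_cast
    ring_nf
  apply Summable.of_nonneg_of_le _ _ hmaj
  · intro k
    have := h0 (2 ^ k)
    positivity
  · intro k
    have hcast : ((2 ^ k : ℕ) : ℝ) = (2:ℝ) ^ k := by push_cast; ring
    have hlog : Real.log ((2 ^ k : ℕ) : ℝ) = (k : ℝ) * Real.log 2 := by
      rw [hcast, Real.log_pow]
    set M : ℝ := max 1 (Real.log ((2 ^ k : ℕ) : ℝ)) with hMdef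
    have hM1' : (1:ℝ) ≤ M := le_max_left _ _
    have hMk : (k : ℝ) * Real.log 2 ≤ M := hlog ▸ le_max_right _ _
    have hkM : (k : ℝ) + 1 ≤ 4 * M := by
      have hl2 : (0.6931 : ℝ) < Real.log 2 := by
        have := Real.log_two_gt_d9
        linarith
      have hknn : (0:ℝ) ≤ (k:ℝ) := Nat.cast_nonneg k
      nlinarith
    have h2k : (0:ℝ) < (2:ℝ) ^ k := by positivity
    have hfval : (2:ℝ) ^ k * f (2 ^ k) = (M ^ L)⁻¹ := by
      simp only [hf]
      rw [mul_inv, ← mul_assoc, ← hcast,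
        mul_inv_cancel₀ (by positivity : ((2 ^ k : ℕ) : ℝ) ≠ 0), one_mul]
    rw [hfval]
    have hMLpos : (0:ℝ) < M ^ L := Real.rpow_pos_of_pos (by linarith) L
    have hkLpos : (0:ℝ) < ((k:ℝ) + 1) ^ L := Real.rpow_pos_of_pos (by positivity) L
    rw [inv_eq_one_div, inv_eq_one_div, mul_one_div, div_le_div_iff₀ hMLpos hkLpos, one_mul]
    calc ((k:ℝ) + 1) ^ L ≤ (4 * M) ^ L :=
          Real.rpow_le_rpow (by positivity) hkM hL0
      _ = 4 ^ L * M ^ L := Real.mul_rpow (by norm_num) (by linarith)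


noncomputable def TT (L : ℝ) (j : ℕ) : ℝ := ∑ k ∈ Finset.Icc 1 j, (Real.log k) ^ L

noncomputable def SS (L : ℝ) (R : ℕ) : ℝ := ∑ r ∈ Finset.Icc 1 R, TT L r

lemma TT_nonneg (L : ℝ) (j : ℕ) : 0 ≤ TT L j := by
  apply Finset.sum_nonneg
  intro k hk
  have h1 : (1:ℕ) ≤ k := (Finset.mem_Icc.1 hk).1
  exact Real.rpow_nonneg (Real.log_nonneg (by exact_mod_cast h1)) _

lemma TT_mono (L : ℝ) : Monotone (TT L) := by
  intro a b hab
  apply Finset.sum_le_sum_of_subset_of_nonneg (Finset.Icc_subset_Icc le_rfl hab)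
  intro k hk _
  have h1 : (1:ℕ) ≤ k := (Finset.mem_Icc.1 hk).1
  exact Real.rpow_nonneg (Real.log_nonneg (by exact_mod_cast h1)) _

lemma SS_nonneg (L : ℝ) (R : ℕ) : 0 ≤ SS L R :=
  Finset.sum_nonneg fun r _ => TT_nonneg L r

lemma SS_succ (L : ℝ) (R : ℕ) : SS L (R+1) = SS L R + TT L (R+1) :=
  Finset.sum_Icc_succ_top (by omega) _

lemma TT_succ (L : ℝ) (j : ℕ) : TT L (j+1) = TT L j + (Real.log (j+1:ℕ)) ^ L :=
  Finset.sum_Icc_succ_top (by omega) _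

lemma SS_lower {L : ℝ} (hL0 : 0 ≤ L) (R : ℕ) (hR : 16 ≤ R) :
    (R:ℝ)/2 * ((R:ℝ)/4) * (((2:ℝ)⁻¹) ^ L * (Real.log R) ^ L) ≤ SS L R := by
  have hR1 : (16:ℝ) ≤ (R:ℝ) := by exact_mod_cast hR
  have hRpos : (0:ℝ) < R := by linarith
  set h : ℕ := R / 2 with hh
  set q : ℕ := (R / 2 + 1) / 2 with hq
  have hb1 : (R:ℝ)/2 ≤ ((R - h : ℕ) : ℝ) := by
    have h2 : R ≤ 2 * (R - h) := by omega
    have h3 := (Nat.cast_le (α := ℝ)).2 h2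
    push_cast at h3
    linarith
  have hb2 : (R:ℝ)/4 ≤ (((h+1) - q : ℕ) : ℝ) := by
    have h2 : R ≤ 4 * ((h+1) - q) := by omega
    have h3 := (Nat.cast_le (α := ℝ)).2 h2
    push_cast at h3
    linarith
  have hq4 : (R:ℝ)/4 ≤ (q:ℝ) + 1 := by
    have h2 : R ≤ 4 * (q + 1) := by omega
    have h3 := (Nat.cast_le (α := ℝ)).2 h2
    push_cast at h3
    linarith
  have hb3 : ((2:ℝ)⁻¹) ^ L * (Real.log R) ^ L ≤ (Real.log ((q:ℝ)+1)) ^ L := by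
    have hsq : Real.sqrt R ≤ (q:ℝ) + 1 := by
      have h4 : (R:ℝ) ≤ ((q:ℝ)+1)^2 := by nlinarith
      calc Real.sqrt R ≤ Real.sqrt (((q:ℝ)+1)^2) := Real.sqrt_le_sqrt h4
        _ = (q:ℝ)+1 := Real.sqrt_sq (by positivity)
    have hlq : (2:ℝ)⁻¹ * Real.log R ≤ Real.log ((q:ℝ)+1) := by
      have h5 := Real.log_le_log (Real.sqrt_pos.2 hRpos) hsq
      rw [Real.log_sqrt hRpos.le] at h5
      linarith
    have hlogR : (1:ℝ) ≤ Real.log R := by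
      rw [Real.le_log_iff_exp_le hRpos]
      have := Real.exp_one_lt_d9
      linarith
    calc ((2:ℝ)⁻¹) ^ L * (Real.log R) ^ L
        = ((2:ℝ)⁻¹ * Real.log R) ^ L := (Real.mul_rpow (by norm_num) (by linarith)).symm
      _ ≤ (Real.log ((q:ℝ)+1)) ^ L :=
          Real.rpow_le_rpow (by positivity) hlq hL0
  have hlogq_nn : 0 ≤ (Real.log ((q:ℝ)+1)) ^ L :=
    Real.rpow_nonneg (Real.log_nonneg (by push_cast; linarith [Nat.cast_nonneg (α := ℝ) q])) _
  have hchain2 : (((h+1) - q : ℕ):ℝ) * (Real.log ((q:ℝ)+1)) ^ L ≤ TT L (h+1) := by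
    calc (((h+1) - q : ℕ):ℝ) * (Real.log ((q:ℝ)+1)) ^ L
        = ∑ _k ∈ Finset.Icc (q+1) (h+1), (Real.log ((q:ℝ)+1)) ^ L := by
          rw [Finset.sum_const, Nat.card_Icc, nsmul_eq_mul]
          congr 2
          omega
      _ ≤ ∑ k ∈ Finset.Icc (q+1) (h+1), (Real.log (k:ℝ)) ^ L := by
          apply Finset.sum_le_sum
          intro k hk
          have hk1 : q + 1 ≤ k := (Finset.mem_Icc.1 hk).1
          apply Real.rpow_le_rpow (Real.log_nonneg (by push_cast; linarith [Nat.cast_nonneg (α := ℝ) q]))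
          · exact Real.log_le_log (by positivity) (by exact_mod_cast hk1)
          · exact hL0
      _ ≤ TT L (h+1) := by
          apply Finset.sum_le_sum_of_subset_of_nonneg (Finset.Icc_subset_Icc (by omega) le_rfl)
          intro k hk _
          have h1 : (1:ℕ) ≤ k := (Finset.mem_Icc.1 hk).1
          exact Real.rpow_nonneg (Real.log_nonneg (by exact_mod_cast h1)) _
  have hchain1 : ((R - h : ℕ):ℝ) * TT L (h+1) ≤ SS L R := by
    calc ((R - h : ℕ):ℝ) * TT L (h+1)
        = ∑ _j ∈ Finset.Icc (h+1) R, TT L (h+1) := by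
          rw [Finset.sum_const, Nat.card_Icc, nsmul_eq_mul]
          congr 2
          omega
      _ ≤ ∑ j ∈ Finset.Icc (h+1) R, TT L j :=
          Finset.sum_le_sum fun j hj => TT_mono L (Finset.mem_Icc.1 hj).1
      _ ≤ SS L R :=
          Finset.sum_le_sum_of_subset_of_nonneg (Finset.Icc_subset_Icc (by omega) le_rfl)
            (fun j _ _ => TT_nonneg L j)
  have hcast1 : (0:ℝ) ≤ ((R - h : ℕ):ℝ) := Nat.cast_nonneg _
  have hcast2 : (0:ℝ) ≤ (((h+1) - q : ℕ):ℝ) := Nat.cast_nonneg _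
  calc (R:ℝ)/2 * ((R:ℝ)/4) * (((2:ℝ)⁻¹) ^ L * (Real.log R) ^ L)
      ≤ ((R - h : ℕ):ℝ) * (((h+1) - q : ℕ):ℝ) * ((Real.log ((q:ℝ)+1)) ^ L) := by
        apply mul_le_mul (mul_le_mul hb1 hb2 (by positivity) hcast1) hb3
        · positivity
        · exact mul_nonneg hcast1 hcast2
    _ = ((R - h : ℕ):ℝ) * ((((h+1) - q : ℕ):ℝ) * (Real.log ((q:ℝ)+1)) ^ L) := by ring
    _ ≤ ((R - h : ℕ):ℝ) * TT L (h+1) := mul_le_mul_of_nonneg_left hchain2 hcast1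
    _ ≤ SS L R := hchain1

/-- The birth-death chain with `m ≡ 1` and `w(R,R+1) = 1 + ∑_{r=1}^R ∑_{k=1}^r (log k)^{1+ε}` is
stochastically incomplete and has curvature `κ(r-1,r) = -(log r)^{1+ε}` for `r ≥ 2`.
(The Keller–Lenz–Wojciechowski completeness criterion is assumed as `hcrit`.) -/
theorem stmt16 (ε : ℝ) (hε : 0 < ε) (G : WeightedGraph ℕ)
    (hbd : ∀ r s : ℕ, s ≠ r + 1 → r ≠ s + 1 → G.w r s = 0)
    (hm : ∀ n, G.m n = 1)
    (hw : ∀ R : ℕ, G.w R (R + 1) =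
      1 + ∑ r ∈ Finset.Icc 1 R, ∑ k ∈ Finset.Icc 1 r, (Real.log k) ^ ((1 : ℝ) + ε))
    (P : ℝ → (ℕ → ℝ) → ℕ → ℝ) (hP : IsHeatSemigroup G P)
    (hcrit : (∀ t : ℝ, 0 < t → ∀ x, P t (fun _ => 1) x = 1) ↔
      ¬ Summable (fun r : ℕ => ((r : ℝ) + 1) / G.w r (r + 1))) :
    (¬ ∀ t : ℝ, 0 < t → ∀ x, P t (fun _ => 1) x = 1) ∧
    ∀ r : ℕ, 2 ≤ r → G.curv (r - 1) r = -(Real.log r) ^ ((1 : ℝ) + ε) := by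
  have hL1 : (1:ℝ) < 1 + ε := by linarith
  have hL0 : (0:ℝ) ≤ 1 + ε := by linarith
  have hwS : ∀ R : ℕ, G.w R (R+1) = 1 + SS (1+ε) R := by
    intro R
    rw [hw R]
    rfl
  have hw1 : ∀ R : ℕ, (1:ℝ) ≤ G.w R (R+1) := by
    intro R
    rw [hwS]
    linarith [SS_nonneg (1+ε) R]
  have hadj : ∀ n : ℕ, G.toSimple.Adj n (n+1) := by
    intro n
    refine ⟨by omega, ?_⟩
    have h1 := hw1 n
    intro h
    rw [h] at h1
    linarith
  have hadj' : ∀ a b : ℕ, G.toSimple.Adj a b → b = a + 1 ∨ a = b + 1 := by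
    intro a b hab
    by_contra hc
    push_neg at hc
    exact hab.2 (hbd a b hc.1 hc.2)
  have hreach : ∀ a b : ℕ, G.toSimple.Reachable a b := by
    have h0 : ∀ n : ℕ, G.toSimple.Reachable 0 n := by
      intro n
      induction n with
      | zero => exact SimpleGraph.Reachable.refl 0
      | succ k ih => exact ih.trans (hadj k).reachable
    intro a b
    exact (h0 a).symm.trans (h0 b)
  have hdadj : ∀ a b : ℕ, G.toSimple.Adj a b → G.dist a b = 1 := by
    intro a b hab
    exact SimpleGraph.dist_eq_one_iff_adj.2 hab
  have hlip : ∀ f : ℕ → ℝ, (∀ a b : ℕ, G.toSimple.Adj a b → |f a - f b| ≤ 1) → G.Lip1 f := by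
    intro f hf x y
    obtain ⟨p, hp⟩ := (hreach x y).exists_walk_length_eq_dist
    show |f x - f y| ≤ ((G.toSimple.dist x y : ℕ) : ℝ)
    rw [← hp]
    clear hp
    induction p with
    | nil => simp
    | @cons a b c h q ih =>
      refine (abs_sub_le (f a) (f b) (f c)).trans ?_
      rw [SimpleGraph.Walk.length_cons]
      push_cast
      have h1 := hf a b h
      linarith [ih]
  have hlap : ∀ (f : ℕ → ℝ) (n : ℕ), G.lap f (n+1) =
      G.w (n+1) (n+2) * (f (n+2) - f (n+1)) + G.w (n+1) n * (f n - f (n+1)) := by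
    intro f n
    unfold WeightedGraph.lap
    rw [hm, div_one]
    have hsub : (Function.support fun y => G.w (n+1) y * (f y - f (n+1))) ⊆
        (({n+2, n} : Finset ℕ) : Set ℕ) := by
      intro y hy
      simp only [Function.mem_support, ne_eq] at hy
      have hwy : G.w (n+1) y ≠ 0 := by
        intro hzero
        exact hy (by rw [hzero, zero_mul])
      have h1 : y = n + 2 ∨ n + 1 = y + 1 := by
        by_contra hc
        push_neg at hc
        exact hwy (hbd (n+1) y (by omega) (by omega))
      simp only [Finset.coe_insert, Finset.coe_singleton, Set.mem_insert_iff,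
        Set.mem_singleton_iff]
      omega
    rw [finsum_eq_sum_of_support_subset _ hsub, Finset.sum_pair (by omega : n + 2 ≠ n)]
  constructor
  · -- stochastic incompleteness
    intro hcomp
    apply hcrit.mp hcomp
    have key : ∀ R : ℕ, 16 ≤ R → ((R:ℝ) + 1) / G.w R (R+1) ≤
        (16 * ((((2:ℝ)⁻¹) ^ ((1:ℝ)+ε))⁻¹)) * (((R:ℝ) * (max 1 (Real.log R)) ^ ((1:ℝ)+ε))⁻¹) := by
      intro R hR
      have hR1 : (16:ℝ) ≤ (R:ℝ) := by exact_mod_cast hR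
      have hRpos : (0:ℝ) < R := by linarith
      have hlogR : (1:ℝ) ≤ Real.log R := by
        rw [Real.le_log_iff_exp_le hRpos]
        have := Real.exp_one_lt_d9
        linarith
      have hmax : max 1 (Real.log R) = Real.log R := max_eq_right hlogR
      have hPpos : (0:ℝ) < (Real.log R) ^ ((1:ℝ)+ε) := Real.rpow_pos_of_pos (by linarith) _
      have hcpos : (0:ℝ) < ((2:ℝ)⁻¹) ^ ((1:ℝ)+ε) := Real.rpow_pos_of_pos (by norm_num) _
      have hSlb := SS_lower hL0 R hR
      have hden : (0:ℝ) < 1 + SS (1+ε) R := by linarith [SS_nonneg (1+ε) R]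
      rw [hwS, hmax]
      have hX : (16 * ((((2:ℝ)⁻¹) ^ ((1:ℝ)+ε))⁻¹)) * (((R:ℝ) * (Real.log R) ^ ((1:ℝ)+ε))⁻¹)
          = 16 / ((((2:ℝ)⁻¹) ^ ((1:ℝ)+ε)) * ((R:ℝ) * (Real.log R) ^ ((1:ℝ)+ε))) := by
        field_simp
      rw [hX, div_le_div_iff₀ hden (by positivity)]
      nlinarith [hSlb, hPpos.le, hcpos.le,
        mul_nonneg (mul_nonneg (mul_nonneg hcpos.le hRpos.le) hPpos.le)
          (show (0:ℝ) ≤ (R:ℝ) - 1 by linarith)]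
    rw [← summable_nat_add_iff 16]
    apply Summable.of_nonneg_of_le
    · intro n
      exact div_nonneg (by positivity) (by linarith [hw1 (n+16)])
    · intro n
      exact key (n+16) (by omega)
    · exact ((summable_nat_add_iff 16).2 (bertrand_sum hL1)).mul_left _
  · -- curvature
    intro r hr
    obtain ⟨s, rfl⟩ : ∃ s : ℕ, r = s + 2 := ⟨r - 2, by omega⟩
    simp only [show s + 2 - 1 = s + 1 from by omega]
    have hd1 : G.dist (s+1) (s+2) = 1 := hdadj _ _ (by simpa [show s+1+1 = s+2 from by omega] using hadj (s+1))
    have hd0 : G.dist s (s+1) = 1 := hdadj _ _ (hadj s)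
    have hd2 : G.dist (s+2) (s+3) = 1 := hdadj _ _ (by simpa [show s+2+1 = s+3 from by omega] using hadj (s+2))
    have hw12 : G.w (s+1) (s+2) = 1 + SS (1+ε) (s+1) := by
      simpa [show s+1+1 = s+2 from by omega] using hwS (s+1)
    have hw01 : G.w s (s+1) = 1 + SS (1+ε) s := hwS s
    have hw23 : G.w (s+2) (s+3) = 1 + SS (1+ε) (s+2) := by
      simpa [show s+2+1 = s+3 from by omega] using hwS (s+2)
    have hval : 2 * G.w (s+1) (s+2) - G.w s (s+1) - G.w (s+2) (s+3)
        = -(Real.log ((s+2 : ℕ) : ℝ)) ^ ((1:ℝ)+ε) := by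
      have f1 : SS (1+ε) (s+1) = SS (1+ε) s + TT (1+ε) (s+1) := SS_succ _ s
      have f2 : SS (1+ε) (s+2) = SS (1+ε) (s+1) + TT (1+ε) (s+2) := by
        simpa [show s+1+1 = s+2 from by omega] using SS_succ (1+ε) (s+1)
      have f3 : TT (1+ε) (s+2) = TT (1+ε) (s+1) + (Real.log ((s+2 : ℕ) : ℝ)) ^ ((1:ℝ)+ε) := by
        simpa [show s+1+1 = s+2 from by omega] using TT_succ (1+ε) (s+1)
      rw [hw12, hw01, hw23]
      linarith
    -- the minimizing function
    set gz : ℕ → ℤ := fun n => max 0 (min (n:ℤ) (2*(s:ℤ)+6 - n)) with hgz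
    set g : ℕ → ℝ := fun n => ((gz n : ℤ) : ℝ) with hgdef
    have hstep : ∀ n : ℕ, |g (n+1) - g n| ≤ 1 := by
      intro n
      have hint : |gz (n+1) - gz n| ≤ 1 := by
        simp only [hgz]
        push_cast
        rw [abs_le]
        omega
      calc |g (n+1) - g n| = |((gz (n+1) - gz n : ℤ) : ℝ)| := by push_cast [hgdef]; ring_nf
        _ = ((|gz (n+1) - gz n| : ℤ) : ℝ) := by rw [Int.cast_abs]
        _ ≤ 1 := by exact_mod_cast hint
    have hedge : ∀ a b : ℕ, G.toSimple.Adj a b → |g a - g b| ≤ 1 := by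
      intro a b hab
      rcases hadj' a b hab with h | h
      · subst h
        rw [abs_sub_comm]
        exact hstep a
      · subst h
        exact hstep b
    have hgLip : G.Lip1 g := hlip g hedge
    have hgsupp : (Function.support g).Finite := by
      apply Set.Finite.subset (Set.finite_Iic (2*s+6))
      intro n hn
      simp only [Function.mem_support, ne_eq] at hn
      simp only [Set.mem_Iic]
      by_contra hc
      push_neg at hc
      apply hn
      simp only [hgdef, hgz]
      have : max 0 (min (n:ℤ) (2*(s:ℤ)+6 - n)) = 0 := by
        have : (2*(s:ℤ)+6 - n) ≤ 0 := by
          have : (2*s+6 : ℕ) < n := hc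
          push_cast
          omega
        omega
      rw [this]
      norm_num
    have hgval : ∀ n : ℕ, n ≤ s + 3 → g n = n := by
      intro n hn
      have : gz n = n := by
        simp only [hgz]
        have : (n:ℤ) ≤ 2*(s:ℤ)+6 - n := by
          have : (n:ℤ) ≤ (s:ℤ) + 3 := by exact_mod_cast hn
          omega
        omega
      simp only [hgdef, this]
      push_cast
      ring
    have hg0 : g s = s := hgval s (by omega)
    have hg1 : g (s+1) = (s:ℝ)+1 := by
      have := hgval (s+1) (by omega); push_cast at this; exact this
    have hg2 : g (s+2) = (s:ℝ)+2 := by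
      have := hgval (s+2) (by omega); push_cast at this; exact this
    have hg3 : g (s+3) = (s:ℝ)+3 := by
      have := hgval (s+3) (by omega); push_cast at this; exact this
    have hlapx : G.lap g (s+1) = G.w (s+1) (s+2) * 1 + G.w (s+1) s * (-1) := by
      have := hlap g s
      rw [show s+1+1 = s+2 from by omega] at this
      rw [this, hg0, hg1, hg2]
      ring_nf
    have hlapy : G.lap g (s+2) = G.w (s+2) (s+3) * 1 + G.w (s+2) (s+1) * (-1) := by
      have := hlap g (s+1)
      rw [show s+1+1 = s+2 from by omega, show s+1+2 = s+3 from by omega] at this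
      rw [this, hg1, hg2, hg3]
      ring_nf
    -- compute the sInf
    show sInf _ = _
    have hmem : (2 * G.w (s+1) (s+2) - G.w s (s+1) - G.w (s+2) (s+3)) ∈
        { c : ℝ | ∃ f : ℕ → ℝ, G.Lip1 f ∧ (Function.support f).Finite ∧
          f (s+2) - f (s+1) = (G.dist (s+1) (s+2) : ℝ) ∧
          c = (G.lap f (s+1) - G.lap f (s+2)) / (G.dist (s+1) (s+2) : ℝ) } := by
      refine ⟨g, hgLip, hgsupp, ?_, ?_⟩
      · rw [hg1, hg2, hd1]
        norm_num
      · rw [hlapx, hlapy, hd1, G.symm (s+2) (s+1), G.symm (s+1) s]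
        push_cast
        ring
    have hlb : ∀ c ∈ { c : ℝ | ∃ f : ℕ → ℝ, G.Lip1 f ∧ (Function.support f).Finite ∧
          f (s+2) - f (s+1) = (G.dist (s+1) (s+2) : ℝ) ∧
          c = (G.lap f (s+1) - G.lap f (s+2)) / (G.dist (s+1) (s+2) : ℝ) },
        2 * G.w (s+1) (s+2) - G.w s (s+1) - G.w (s+2) (s+3) ≤ c := by
      rintro c ⟨f, hf, hsupp, hfd, rfl⟩
      rw [hd1] at hfd ⊢
      push_cast at hfd ⊢
      rw [div_one]
      have hb1 : -1 ≤ f s - f (s+1) := by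
        have := hf s (s+1)
        rw [hd0] at this
        push_cast at this
        have := abs_le.1 this
        linarith [this.1]
      have hb2 : f (s+3) - f (s+2) ≤ 1 := by
        have h3 := hf (s+3) (s+2)
        have hsym : G.dist (s+3) (s+2) = 1 := by
          have hadj32 : G.toSimple.Adj (s+3) (s+2) := by
            apply SimpleGraph.Adj.symm
            simpa [show s+2+1 = s+3 from by omega] using hadj (s+2)
          exact hdadj _ _ hadj32
        rw [hsym] at h3
        push_cast at h3
        have := abs_le.1 h3
        linarith [this.1]
      have hlapfx := hlap f s
      rw [show s+1+1 = s+2 from by omega] at hlapfx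
      have hlapfy := hlap f (s+1)
      rw [show s+1+1 = s+2 from by omega, show s+1+2 = s+3 from by omega] at hlapfy
      rw [hlapfx, hlapfy, hfd, show f (s+1) - f (s+2) = -1 by linarith]
      have hnn1 : 0 ≤ G.w (s+1) s := G.nonneg _ _
      have hnn2 : 0 ≤ G.w (s+2) (s+3) := G.nonneg _ _
      have hsym12 : G.w (s+2) (s+1) = G.w (s+1) (s+2) := G.symm _ _
      have hsym01 : G.w (s+1) s = G.w s (s+1) := G.symm _ _
      nlinarith [mul_le_mul_of_nonneg_left (show -1 ≤ f s - f (s+1) from hb1) hnn1,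
        mul_le_mul_of_nonneg_left (show f (s+3) - f (s+2) ≤ 1 from hb2) hnn2]
    rw [le_antisymm (csInf_le ⟨_, hlb⟩ hmem) (le_csInf ⟨_, hmem⟩ hlb), hval]
end

section
/- For every positive summable sequence (k_r)_{r≥1} there exists an infinite weighted graph (in fact a birth-death chain) with bounded weighted vertex degree whose sphere curvatures satisfy κ(r) ≥ k_r for all r ≥ 1 and Σ_r κ(r) < ∞. Concretely, the birth-death chain with m(0)=1, w(0,1)=2Σ_{i>0}k_i, and inductively m(r) = w(r,r-1)/k_{r+1}, w(r,r+1) = 2m(r)Σ_{i>r}k_i has curvatures κ(r-1,r) = k_r + k_{r+1} for r > 1, κ(0,1) = 2k_1 + k_2, and Deg(r) ≤ 3Σ_i k_i for all r. -/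
open scoped BigOperators

/-- Tail sum `∑_{i > r} k i`. -/
noncomputable def bdT (k : ℕ → ℝ) (r : ℕ) : ℝ := ∑' i, k (i + r + 1)

/-- The pair `(m r, w r (r+1))` of the birth-death chain. -/
noncomputable def bdMU (k : ℕ → ℝ) : ℕ → ℝ × ℝ
  | 0 => (1, 2 * bdT k 0)
  | r + 1 => ((bdMU k r).2 / k (r + 2), 2 * ((bdMU k r).2 / k (r + 2)) * bdT k (r + 1))

/-- The edge weights of the birth-death chain. -/
noncomputable def bdW (k : ℕ → ℝ) (a b : ℕ) : ℝ :=
  if b = a + 1 then (bdMU k a).2 else if a = b + 1 then (bdMU k b).2 else 0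

lemma bdW_succ (k : ℕ → ℝ) (a : ℕ) : bdW k a (a + 1) = (bdMU k a).2 := by
  simp [bdW]

lemma bdW_pred (k : ℕ → ℝ) (a : ℕ) : bdW k (a + 1) a = (bdMU k a).2 := by
  simp [bdW, show ¬ (a = a + 1 + 1) by omega]

lemma bdW_eq_zero (k : ℕ → ℝ) (a b : ℕ) (h1 : b ≠ a + 1) (h2 : a ≠ b + 1) :
    bdW k a b = 0 := by
  simp [bdW, h1, h2]

/-- For every positive summable sequence `(k_r)_{r ≥ 1}` there is an infinite birth-death chain
with bounded weighted vertex degree whose sphere curvatures `κ(r) = κ(r-1,r)` satisfy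
`κ(r) ≥ k_r` for all `r ≥ 1` and `∑_r κ(r) < ∞`. -/
theorem stmt18 (k : ℕ → ℝ) (hk : ∀ r : ℕ, 1 ≤ r → 0 < k r) (hsum : Summable k) :
    ∃ G : WeightedGraph ℕ,
      (∀ r s : ℕ, s ≠ r + 1 → r ≠ s + 1 → G.w r s = 0) ∧
      (∀ r : ℕ, 0 < G.w r (r + 1)) ∧
      (∃ M : ℝ, ∀ x, G.deg x ≤ M) ∧
      (∀ r : ℕ, 1 ≤ r → k r ≤ G.curv (r - 1) r) ∧
      Summable (fun r : ℕ => G.curv r (r + 1)) := by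
  -- Abbreviations
  set U : ℕ → ℝ := fun r => (bdMU k r).2 with hUdef'
  set Mm : ℕ → ℝ := fun r => (bdMU k r).1 with hMdef'
  have hsum' : ∀ r : ℕ, Summable (fun i => k (i + r + 1)) := by
    intro r
    exact (summable_nat_add_iff (r + 1)).2 hsum
  have hTpos : ∀ r : ℕ, 0 < bdT k r := by
    intro r
    exact Summable.tsum_pos (hsum' r) (fun i => (hk _ (by omega)).le) 0 (hk _ (by omega))
  have hTrec : ∀ r : ℕ, bdT k r = k (r + 1) + bdT k (r + 1) := by
    intro r
    rw [show bdT k r = ∑' i, k (i + r + 1) from rfl, Summable.tsum_eq_zero_add (hsum' r)]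
    congr 1
    · congr 1; omega
    · exact tsum_congr fun b => by congr 1; omega
  have hTle : ∀ r : ℕ, bdT k r ≤ bdT k 0 := by
    intro r
    induction r with
    | zero => exact le_refl _
    | succ n ih =>
      have := hTrec n
      have := hk (n + 1) (by omega)
      linarith
  have hkT : ∀ r : ℕ, k (r + 1) ≤ bdT k r := by
    intro r
    have := hTrec r
    have := hTpos (r + 1)
    linarith
  have hM0 : Mm 0 = 1 := rfl
  have hU0 : U 0 = 2 * bdT k 0 := rfl
  have hMrec : ∀ r : ℕ, Mm (r + 1) = U r / k (r + 2) := fun r => rfl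
  have hUval : ∀ r : ℕ, U r = 2 * Mm r * bdT k r := by
    intro r
    cases r with
    | zero => rw [hU0, hM0]; ring
    | succ n => rfl
  have hpos : ∀ r : ℕ, 0 < Mm r ∧ 0 < U r := by
    intro r
    induction r with
    | zero => exact ⟨one_pos, by rw [hU0]; have := hTpos 0; positivity⟩
    | succ n ih =>
      have hm : 0 < Mm (n + 1) := by
        rw [hMrec n]; exact div_pos ih.2 (hk _ (by omega))
      refine ⟨hm, ?_⟩
      rw [hUval (n + 1)]
      have := hTpos (n + 1)
      positivity
  have hMpos : ∀ r : ℕ, 0 < Mm r := fun r => (hpos r).1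
  have hUpos : ∀ r : ℕ, 0 < U r := fun r => (hpos r).2
  have hUM : ∀ r : ℕ, U r = Mm (r + 1) * k (r + 2) := by
    intro r
    rw [hMrec r, div_mul_cancel₀]
    exact (hk _ (by omega)).ne'
  have hWsucc : ∀ a : ℕ, bdW k a (a + 1) = U a := fun a => bdW_succ k a
  have hWpred : ∀ a : ℕ, bdW k (a + 1) a = U a := fun a => bdW_pred k a
  -- The graph
  have hsymm : ∀ x y : ℕ, bdW k x y = bdW k y x := by
    intro x y
    unfold bdW
    split_ifs <;> first | rfl | omega
  have hloop : ∀ x : ℕ, bdW k x x = 0 := fun x => bdW_eq_zero k x x (by omega) (by omega)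
  have hnn : ∀ x y : ℕ, 0 ≤ bdW k x y := by
    intro x y
    unfold bdW
    split_ifs with h1 h2
    · exact (hUpos x).le
    · exact (hUpos y).le
    · exact le_refl _
  have hfin : ∀ x : ℕ, Set.Finite {y | bdW k x y ≠ 0} := by
    intro x
    apply Set.Finite.subset ((Set.finite_singleton (x - 1)).insert (x + 1))
    intro y hy
    by_contra h
    rw [Set.mem_insert_iff, Set.mem_singleton_iff] at h
    push_neg at h
    exact hy (bdW_eq_zero k x y (by omega) (by omega))
  set G : WeightedGraph ℕ := ⟨bdW k, Mm, hsymm, hloop, hnn, hMpos, hfin⟩ with hG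
  -- basic graph facts
  have hadj : ∀ r : ℕ, G.toSimple.Adj r (r + 1) := by
    intro r
    refine ⟨by omega, ?_⟩
    show bdW k r (r + 1) ≠ 0
    rw [bdW_succ]
    exact (hUpos r).ne'
  have hreach0 : ∀ n : ℕ, G.toSimple.Reachable 0 n := by
    intro n
    induction n with
    | zero => exact SimpleGraph.Reachable.refl 0
    | succ n ih => exact ih.trans (hadj n).reachable
  have hreach : ∀ a b : ℕ, G.toSimple.Reachable a b := fun a b =>
    (hreach0 a).symm.trans (hreach0 b)
  have hwalk : ∀ (a b : ℕ) (p : G.toSimple.Walk a b), |(a : ℤ) - b| ≤ p.length := by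
    intro a b p
    induction p with
    | nil => simp
    | @cons u c d h q ih =>
      have hc : c = u + 1 ∨ u = c + 1 := by
        by_contra hcon
        push_neg at hcon
        exact h.2 (bdW_eq_zero k u c hcon.1 hcon.2)
      rw [SimpleGraph.Walk.length_cons]
      rw [abs_sub_le_iff] at ih ⊢
      push_cast
      push_cast at ih
      omega
  have hdistge : ∀ a b : ℕ, |(a : ℤ) - b| ≤ (G.toSimple.dist a b : ℤ) := by
    intro a b
    obtain ⟨p, hp⟩ := (hreach a b).exists_walk_length_eq_dist
    rw [← hp]
    exact hwalk a b p
  have hdist1 : ∀ r : ℕ, G.toSimple.dist r (r + 1) = 1 := fun r =>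
    SimpleGraph.dist_eq_one_iff_adj.mpr (hadj r)
  have hdistG : ∀ r : ℕ, (G.dist r (r + 1) : ℝ) = 1 := by
    intro r
    rw [show G.dist r (r + 1) = G.toSimple.dist r (r + 1) from rfl, hdist1]
    norm_num
  -- finsum computations
  have hfinsum : ∀ (g : ℕ → ℝ) (x : ℕ),
      ∑ᶠ y, G.w x y * g y = bdW k x (x - 1) * g (x - 1) + bdW k x (x + 1) * g (x + 1) := by
    intro g x
    have hsub : Function.support (fun y => G.w x y * g y) ⊆
        (({x - 1, x + 1} : Finset ℕ) : Set ℕ) := by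
      intro y hy
      have hw : bdW k x y ≠ 0 := by
        intro h
        apply hy
        show bdW k x y * g y = 0
        rw [h]; ring
      have hor : y = x + 1 ∨ x = y + 1 := by
        by_contra hcon
        push_neg at hcon
        exact hw (bdW_eq_zero k x y hcon.1 hcon.2)
      simp only [Finset.coe_insert, Finset.coe_singleton, Set.mem_insert_iff,
        Set.mem_singleton_iff]
      omega
    rw [finsum_eq_sum_of_support_subset _ hsub, Finset.sum_pair (by omega : x - 1 ≠ x + 1)]
  have hlap : ∀ (f : ℕ → ℝ) (x : ℕ), G.lap f x =
      (bdW k x (x - 1) * (f (x - 1) - f x) + bdW k x (x + 1) * (f (x + 1) - f x)) / Mm x := by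
    intro f x
    rw [show G.lap f x = (∑ᶠ y, G.w x y * (f y - f x)) / G.m x from rfl,
      hfinsum (fun y => f y - f x) x]
  have hdeg : ∀ x : ℕ, G.deg x = (bdW k x (x - 1) + bdW k x (x + 1)) / Mm x := by
    intro x
    rw [show G.deg x = (∑ᶠ y, G.w x y) / G.m x from rfl,
      show (∑ᶠ y, G.w x y) = ∑ᶠ y, G.w x y * (fun _ => (1 : ℝ)) y from by simp,
      hfinsum (fun _ => (1 : ℝ)) x]
    simp
    rfl
  -- the curvature computation
  have hcurv : ∀ r : ℕ, G.curv r (r + 1) =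
      if r = 0 then 2 * k 1 + k 2 else k (r + 1) + k (r + 2) := by
    intro r
    have hd := hdistG r
    set κ : ℝ := (U r - bdW k r (r - 1)) / Mm r + (U r - U (r + 1)) / Mm (r + 1) with hκ
    have hlb : ∀ c ∈ {c : ℝ | ∃ f : ℕ → ℝ, G.Lip1 f ∧ (Function.support f).Finite ∧
        f (r + 1) - f r = (G.dist r (r + 1) : ℝ) ∧
        c = (G.lap f r - G.lap f (r + 1)) / (G.dist r (r + 1) : ℝ)}, κ ≤ c := by
      rintro c ⟨f, hf, -, hgrad, rfl⟩
      rw [hd, div_one]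
      rw [hd] at hgrad
      rw [hlap f r, hlap f (r + 1)]
      simp only [Nat.add_sub_cancel]
      rw [hWsucc r, hWpred r, hWsucc (r + 1)]
      have ht : -(bdW k r (r - 1)) ≤ bdW k r (r - 1) * (f (r - 1) - f r) := by
        rcases Nat.eq_zero_or_pos r with h0 | h1
        · subst h0
          show -(bdW k 0 0) ≤ bdW k 0 0 * (f 0 - f 0)
          rw [bdW_eq_zero k 0 0 (by omega) (by omega)]
          norm_num
        · obtain ⟨s, rfl⟩ : ∃ s, r = s + 1 := ⟨r - 1, by omega⟩
          show -(bdW k (s + 1) s) ≤ bdW k (s + 1) s * (f s - f (s + 1))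
          have hb := hf s (s + 1)
          rw [show G.dist s (s + 1) = G.toSimple.dist s (s + 1) from rfl, hdist1 s] at hb
          norm_num [abs_le] at hb
          rw [hWpred s]
          nlinarith [(hUpos s).le, hb.1, hb.2]
      have hs' : U (r + 1) * (f (r + 2) - f (r + 1)) ≤ U (r + 1) := by
        have hb := hf (r + 2) (r + 1)
        rw [show G.dist (r + 2) (r + 1) = G.toSimple.dist (r + 2) (r + 1) from rfl,
          SimpleGraph.dist_comm, hdist1 (r + 1)] at hb
        norm_num [abs_le] at hb
        nlinarith [(hUpos (r + 1)).le, hb.1, hb.2]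
      have hMr := hMpos r
      have hMr1 := hMpos (r + 1)
      have h1 : (U r - bdW k r (r - 1)) / Mm r ≤
          (bdW k r (r - 1) * (f (r - 1) - f r) + U r * (f (r + 1) - f r)) / Mm r := by
        rw [div_le_div_iff_of_pos_right hMr, hgrad]
        linarith
      have h2 : (U r * (f r - f (r + 1)) + U (r + 1) * (f (r + 2) - f (r + 1))) / Mm (r + 1) ≤
          (U (r + 1) - U r) / Mm (r + 1) := by
        rw [div_le_div_iff_of_pos_right hMr1]
        have hgr : f r - f (r + 1) = -1 := by linarith
        rw [hgr]
        linarith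
      have h3 : (U r - U (r + 1)) / Mm (r + 1) = -((U (r + 1) - U r) / Mm (r + 1)) := by ring
      rw [hκ, h3]
      linarith
    have hmem : κ ∈ {c : ℝ | ∃ f : ℕ → ℝ, G.Lip1 f ∧ (Function.support f).Finite ∧
        f (r + 1) - f r = (G.dist r (r + 1) : ℝ) ∧
        c = (G.lap f r - G.lap f (r + 1)) / (G.dist r (r + 1) : ℝ)} := by
      set A : ℕ → ℤ := fun n => max (min (n : ℤ) (2 * (r : ℤ) + 4 - n)) 0 with hA
      set f : ℕ → ℝ := fun n => ((A n : ℤ) : ℝ) with hfdef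
      have hfval : ∀ n : ℕ, n ≤ r + 2 → f n = (n : ℝ) := by
        intro n hn
        have hn' : (n : ℤ) ≤ (r : ℤ) + 2 := by exact_mod_cast hn
        show ((A n : ℤ) : ℝ) = (n : ℝ)
        rw [show A n = (n : ℤ) from by simp only [hA]; omega]
        push_cast
        rfl
      refine ⟨f, ?_, ?_, ?_, ?_⟩
      · -- Lip1
        intro a b
        have key : |A a - A b| ≤ |(a : ℤ) - b| := by
          have h1 : (a : ℤ) - b ≤ |(a : ℤ) - b| := le_abs_self _
          have h2 : (b : ℤ) - a ≤ |(a : ℤ) - b| := by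
            rw [abs_sub_comm]; exact le_abs_self _
          rw [abs_sub_le_iff]
          simp only [hA]
          generalize |(a : ℤ) - (b : ℤ)| = c at h1 h2
          omega
        have key2 := le_trans key (hdistge a b)
        have hcast : f a - f b = ((A a - A b : ℤ) : ℝ) := by
          show ((A a : ℤ) : ℝ) - ((A b : ℤ) : ℝ) = _
          push_cast
          ring
        rw [hcast, ← Int.cast_abs, show G.dist a b = G.toSimple.dist a b from rfl]
        exact_mod_cast key2
      · -- finite support
        apply Set.Finite.subset (Set.finite_Iic (2 * r + 4))
        intro n hn
        simp only [Set.mem_Iic]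
        by_contra hcon
        push_neg at hcon
        apply hn
        show ((A n : ℤ) : ℝ) = 0
        have hn' : (2 * (r : ℤ) + 4) < n := by exact_mod_cast hcon
        rw [show A n = 0 from by simp only [hA]; omega]
        norm_num
      · rw [hd, hfval (r + 1) (by omega), hfval r (by omega)]
        push_cast
        ring
      · rw [hd, div_one, hlap f r, hlap f (r + 1)]
        simp only [Nat.add_sub_cancel]
        rw [hWsucc r, hWpred r, hWsucc (r + 1)]
        have hterm : bdW k r (r - 1) * (f (r - 1) - f r) = -(bdW k r (r - 1)) := by
          rcases Nat.eq_zero_or_pos r with h0 | h1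
          · subst h0
            show bdW k 0 0 * (f 0 - f 0) = -(bdW k 0 0)
            rw [bdW_eq_zero k 0 0 (by omega) (by omega)]
            ring
          · obtain ⟨s, rfl⟩ : ∃ s, r = s + 1 := ⟨r - 1, by omega⟩
            show bdW k (s + 1) s * (f s - f (s + 1)) = -(bdW k (s + 1) s)
            rw [hfval s (by omega), hfval (s + 1) (by omega)]
            push_cast
            ring
        rw [hterm, hfval (r + 1) (by omega), hfval (r + 2) (by omega), hfval r (by omega)]
        have hMr := (hMpos r).ne'
        have hMr1 := (hMpos (r + 1)).ne'
        rw [hκ]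
        push_cast
        field_simp
        ring
    have hinf : G.curv r (r + 1) = κ := by
      rw [show G.curv r (r + 1) = sInf {c : ℝ | ∃ f : ℕ → ℝ, G.Lip1 f ∧
        (Function.support f).Finite ∧
        f (r + 1) - f r = (G.dist r (r + 1) : ℝ) ∧
        c = (G.lap f r - G.lap f (r + 1)) / (G.dist r (r + 1) : ℝ)} from rfl]
      exact le_antisymm (csInf_le ⟨κ, hlb⟩ hmem) (le_csInf ⟨κ, hmem⟩ hlb)
    rw [hinf, hκ]
    rcases r with _ | s
    · simp only [if_pos rfl]
      have h4 : (U 0 - U 1) / Mm 1 = k 2 - 2 * bdT k 1 := by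
        rw [hUM 0, hUval 1]
        have := (hMpos 1).ne'
        field_simp
      show (U 0 - bdW k 0 0) / Mm 0 + (U 0 - U 1) / Mm 1 = 2 * k 1 + k 2
      rw [bdW_eq_zero k 0 0 (by omega) (by omega), hM0, h4, hU0, hTrec 0]
      ring
    · simp only [if_neg (Nat.succ_ne_zero s)]
      show (U (s + 1) - bdW k (s + 1) s) / Mm (s + 1) + (U (s + 1) - U (s + 2)) / Mm (s + 2) =
        k (s + 2) + k (s + 3)
      have h5 : (U (s + 1) - bdW k (s + 1) s) / Mm (s + 1) = 2 * bdT k (s + 1) - k (s + 2) := by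
        rw [hWpred s, hUM s, hUval (s + 1)]
        have := (hMpos (s + 1)).ne'
        field_simp
      have h6 : (U (s + 1) - U (s + 2)) / Mm (s + 2) = k (s + 3) - 2 * bdT k (s + 2) := by
        rw [hUM (s + 1), hUval (s + 2)]
        have := (hMpos (s + 2)).ne'
        field_simp
      rw [h5, h6, hTrec (s + 1)]
      ring
  -- assemble
  refine ⟨G, ?_, ?_, ?_, ?_, ?_⟩
  · intro r s h1 h2
    exact bdW_eq_zero k r s h1 h2
  · intro r
    show 0 < bdW k r (r + 1)
    rw [hWsucc r]
    exact hUpos r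
  · refine ⟨3 * bdT k 0, ?_⟩
    intro x
    rw [hdeg x]
    cases x with
    | zero =>
      rw [show bdW k 0 (0 - 1) = 0 from bdW_eq_zero k 0 0 (by omega) (by omega),
        hWsucc 0, hM0, hU0]
      have := hTpos 0
      rw [div_one]
      linarith
    | succ s =>
      rw [show bdW k (s + 1) (s + 1 - 1) = U s from hWpred s, hWsucc (s + 1)]
      have h7 : (U s + U (s + 1)) / Mm (s + 1) = k (s + 2) + 2 * bdT k (s + 1) := by
        rw [hUM s, hUval (s + 1)]
        have := (hMpos (s + 1)).ne'
        field_simp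
      rw [h7]
      have := hkT (s + 1)
      have := hTle (s + 1)
      linarith
  · intro r hr
    obtain ⟨s, rfl⟩ : ∃ s, r = s + 1 := ⟨r - 1, by omega⟩
    show k (s + 1) ≤ G.curv s (s + 1)
    rw [hcurv s]
    rcases Nat.eq_zero_or_pos s with h0 | h1
    · subst h0
      simp only [if_pos rfl]
      have := hk 1 (by omega)
      have := hk 2 (by omega)
      norm_num
      linarith
    · rw [if_neg (by omega)]
      have := hk (s + 2) (by omega)
      obtain ⟨t, rfl⟩ : ∃ t, s = t + 1 := ⟨s - 1, by omega⟩
      linarith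
  · apply (summable_nat_add_iff 1).mp
    have heq : (fun n : ℕ => G.curv (n + 1) (n + 1 + 1)) = fun n : ℕ => k (n + 2) + k (n + 3) := by
      funext n
      rw [hcurv (n + 1), if_neg (Nat.succ_ne_zero n)]
    rw [heq]
    exact ((summable_nat_add_iff 2).mpr hsum).add ((summable_nat_add_iff 3).mpr hsum)
end
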